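/- arXiv:2605.28299 — 3 statements merged into one kernel-verified Lean document; each statement's English description precedes it below -/
import Mathlib

section
/- Let Γ = (V,R) be a graph and G a profinite group topologically isomorphic to G_Γ. Suppose given a bijection v ↦ N_v from V onto {N : N a closed normal subgroup of G with G/N ≅ D_p} and a bijection r ↦ M_r from R onto {M : M a closed normal subgroup of G with G/M ≅ W}, satisfying: (1) for each v ∈ V there is an isomorphism φ_v : G_Γ/ker(π_v) → G/N_v; (2) for each r = (v,v') ∈ R one has M_r ⊆ N_v ∩ N_{v'}, and there is an isomorphism φ_r : G_Γ/ker(π_r) → G/M_r such that the canonical map G/M_r → G/N_v × G/N_{v'} composed with φ_r equals (φ_v × φ_{v'}) composed with the canonical map G_Γ/ker(π_r) → G_Γ/ker(π_v) × G_Γ/ker(π_{v'}). Then there is a unique continuous isomorphism φ : G_Γ → G which induces φ_v on G_Γ/ker(π_v) for each v ∈ V and induces φ_r on G_Γ/ker(π_r) for each r ∈ R. -/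
open Function

noncomputable section

/-- A discrete group is a topological group. -/
instance (priority := 50) discreteTopologicalGroup (G : Type*) [Group G] [TopologicalSpace G]
    [DiscreteTopology G] : IsTopologicalGroup G where
  continuous_mul := continuous_of_discreteTopology
  continuous_inv := continuous_of_discreteTopology

/-- The sign epimorphism `τ : D_p → C_2 = {±1}` killing the rotations. -/
def dihedralSign (p : ℕ) : DihedralGroup p →* ℤˣ where
  toFun x := match x with
    | DihedralGroup.r _ => 1
    | DihedralGroup.sr _ => -1
  map_one' := rfl
  map_mul' a b := by cases a <;> cases b <;> rfl

/-- `{±1}` acts on a commutative group by exponentiation (i.e. `-1` acts by inversion). -/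
def unitsIntAut (A : Type*) [CommGroup A] : ℤˣ →* MulAut A where
  toFun u :=
    { toFun := fun x => x ^ (u : ℤ)
      invFun := fun x => x ^ (u : ℤ)
      left_inv := fun x => by rcases Int.units_eq_one_or u with h | h <;> simp [h]
      right_inv := fun x => by rcases Int.units_eq_one_or u with h | h <;> simp [h]
      map_mul' := fun x y => mul_zpow x y _ }
  map_one' := by ext x; simp
  map_mul' u v := by
    ext x
    rcases Int.units_eq_one_or u with h | h <;>
      rcases Int.units_eq_one_or v with h' | h' <;>
        simp [h, h']

/-- The action of `D_p × D_p` on `C_q` given by `(x,y) · g = g^(τ(x)τ(y))`. -/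
def Wact (p q : ℕ) : DihedralGroup p × DihedralGroup p →* MulAut (Multiplicative (ZMod q)) :=
  (unitsIntAut (Multiplicative (ZMod q))).comp
    (((dihedralSign p).comp (MonoidHom.fst _ _)) * ((dihedralSign p).comp (MonoidHom.snd _ _)))

/-- The group `W = C_q ⋊ (D_p × D_p)`. -/
abbrev Wgrp (p q : ℕ) : Type :=
  SemidirectProduct (Multiplicative (ZMod q)) (DihedralGroup p × DihedralGroup p) (Wact p q)

/-- The quotient map `λ : W → D_p × D_p`. -/
abbrev lamW (p q : ℕ) : Wgrp p q →* DihedralGroup p × DihedralGroup p :=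
  SemidirectProduct.rightHom

/-- The group `G_Γ ≤ D_p^V × W^R` associated to a graph `Γ = (V, R)`. -/
def GGamma (p q : ℕ) (V : Type*) (R : Set (V × V)) :
    Subgroup ((V → DihedralGroup p) × (R → Wgrp p q)) where
  carrier := {x | ∀ r : R,
    SemidirectProduct.rightHom (x.2 r) = (x.1 (r : V × V).1, x.1 (r : V × V).2)}
  one_mem' := by intro r; simp; rfl
  mul_mem' := by
    intro a b ha hb r
    simp only [Set.mem_setOf_eq] at ha hb
    simp only [Prod.snd_mul, Pi.mul_apply, map_mul, Prod.fst_mul, ha r, hb r, Prod.mk_mul_mk]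
  inv_mem' := by
    intro a ha r
    simp only [Set.mem_setOf_eq] at ha
    simp only [Prod.snd_inv, Pi.inv_apply, map_inv, Prod.fst_inv, ha r, Prod.inv_mk]

instance (n : ℕ) : TopologicalSpace (DihedralGroup n) := ⊥
instance (n : ℕ) : DiscreteTopology (DihedralGroup n) := ⟨rfl⟩
instance (p q : ℕ) : TopologicalSpace (Wgrp p q) := ⊥
instance (p q : ℕ) : DiscreteTopology (Wgrp p q) := ⟨rfl⟩

variable (p q : ℕ) (V : Type*) (R : Set (V × V))

/-- The coordinate projection `π_v : G_Γ → D_p` at a vertex `v`. -/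
def vProj (v : V) : ↥(GGamma p q V R) →* DihedralGroup p :=
  (Pi.evalMonoidHom (fun _ : V => DihedralGroup p) v).comp
    ((MonoidHom.fst _ _).comp (GGamma p q V R).subtype)

/-- The coordinate projection `π_r : G_Γ → W` at an edge `r`. -/
def eProj (r : R) : ↥(GGamma p q V R) →* Wgrp p q :=
  (Pi.evalMonoidHom (fun _ : R => Wgrp p q) r).comp
    ((MonoidHom.snd _ _).comp (GGamma p q V R).subtype)

variable (I : Type*)

/-- The coordinate projection `π_v : G_Γ × C_2^I → D_p` at a vertex `v`. -/
def vProjK (v : V) : (↥(GGamma p q V R) × (I → ℤˣ)) →* DihedralGroup p :=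
  (vProj p q V R v).comp (MonoidHom.fst _ _)

/-- The coordinate projection `π_r : G_Γ × C_2^I → W` at an edge `r`. -/
def eProjK (r : R) : (↥(GGamma p q V R) × (I → ℤˣ)) →* Wgrp p q :=
  (eProj p q V R r).comp (MonoidHom.fst _ _)

/-- The map `ξ_Γ : G_Γ → C_2^V`, `((a_v), (b_r)) ↦ (τ(a_v))_v`. -/
def xiGamma : ↥(GGamma p q V R) →* (V → ℤˣ) :=
  Pi.monoidHom fun v => (dihedralSign p).comp (vProj p q V R v)

end

section Generic

variable {A B M : Type*} [Group A] [Group B] [Group M]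

theorem sec_formula (f : A →* M) (π : A →* B) (s : B →* A)
    (hs : ∀ b, π (s b) = b) (hk : π.ker ≤ f.ker) (x : A) : f x = f (s (π x)) := by
  have h1 : x * (s (π x))⁻¹ ∈ π.ker := by
    simp [MonoidHom.mem_ker, hs]
  have h2 := hk h1
  rw [MonoidHom.mem_ker] at h2
  have := congrArg (· * f (s (π x))) h2
  simpa [mul_assoc] using this

theorem sec_bijective (f : A →* M) (π : A →* B) (s : B →* A)
    (hs : ∀ b, π (s b) = b) (hk : π.ker = f.ker) (hf : Function.Surjective f) :
    Function.Bijective (f.comp s) := by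
  constructor
  · intro b b' hbb
    have : f ((s b) * (s b')⁻¹) = 1 := by
      simp only [MonoidHom.comp_apply] at hbb
      simp [hbb]
    have h2 : (s b) * (s b')⁻¹ ∈ π.ker := by rw [hk]; exact this
    rw [MonoidHom.mem_ker] at h2
    simp only [map_mul, map_inv, hs] at h2
    have := congrArg (· * b') h2
    simpa [mul_assoc] using this
  · intro m
    obtain ⟨x, hx⟩ := hf m
    exact ⟨π x, by rw [MonoidHom.comp_apply, ← sec_formula f π s hs hk.le x, hx]⟩

theorem pi_mem_single {ι : Type*} [DecidableEq ι] {β : ι → Type*} [∀ i, Group (β i)]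
    (Q : Subgroup (∀ i, β i)) (S : Finset ι) :
    ∀ b : (∀ i, β i), (∀ i ∉ S, b i = 1) → (∀ i, Pi.mulSingle i (b i) ∈ Q) → b ∈ Q := by
  classical
  induction S using Finset.induction_on with
  | empty =>
    intro b hb _
    have : b = 1 := funext fun i => hb i (by simp)
    rw [this]; exact Q.one_mem
  | @insert w S' hw ih =>
    intro b hb hsingle
    have hdec : b = Pi.mulSingle w (b w) * Function.update b w 1 := by
      funext i
      by_cases hiw : i = w
      · subst hiw; simp
      · simp [Pi.mulSingle_eq_of_ne hiw, Function.update_of_ne hiw]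
    rw [hdec]
    refine Q.mul_mem (hsingle w) (ih _ ?_ ?_)
    · intro i hi
      by_cases hiw : i = w
      · subst hiw; simp
      · rw [Function.update_of_ne hiw]
        exact hb i (by simp [hiw, hi])
    · intro i
      by_cases hiw : i = w
      · subst hiw; simpa using Q.one_mem
      · rw [Function.update_of_ne hiw]
        exact hsingle i

end Generic

section DihedralFacts

open DihedralGroup

theorem dih_r_pow {p : ℕ} (i : ZMod p) (n : ℕ) : (r i : DihedralGroup p) ^ n = r (n • i) := by
  induction n with
  | zero => rw [pow_zero, zero_nsmul, one_def]
  | succ m ih => rw [pow_succ, ih, r_mul_r, succ_nsmul]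

theorem dih_one_ne_zero {p : ℕ} (hp : p.Prime) : (1 : ZMod p) ≠ 0 := by
  haveI : Fact p.Prime := ⟨hp⟩
  exact one_ne_zero

theorem dih_two_ne_zero {p : ℕ} (hp : p.Prime) (hpo : Odd p) : (2 : ZMod p) ≠ 0 := by
  haveI : Fact p.Prime := ⟨hp⟩
  have hp2 : p ≠ 2 := by rintro rfl; exact (by decide : ¬ Odd 2) hpo
  have hnd : ¬ (p ∣ 2) := by
    rw [Nat.prime_dvd_prime_iff_eq hp Nat.prime_two]; exact hp2
  intro h
  have h2 : ((2 : ℕ) : ZMod p) = 0 := by exact_mod_cast h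
  exact hnd ((ZMod.natCast_eq_zero_iff 2 p).mp h2)

theorem dih_two_mul_eq_zero {p : ℕ} (hp : p.Prime) (hpo : Odd p) {i : ZMod p}
    (h : i + i = 0) : i = 0 := by
  haveI : Fact p.Prime := ⟨hp⟩
  have h2 : (2 : ZMod p) * i = 0 := by linear_combination h
  rcases mul_eq_zero.mp h2 with h' | h'
  · exact absurd h' (dih_two_ne_zero hp hpo)
  · exact h'

theorem dih_central {p : ℕ} (hp : p.Prime) (hpo : Odd p) {i₀ j : ZMod p} (hj : j ≠ 0)
    (z : DihedralGroup p) (h1 : Commute z (sr i₀)) (h2 : Commute z (r j)) : z = 1 := by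
  cases z with
  | r m =>
    have heq : sr (i₀ + m) = sr (i₀ - m) := by
      have := h1.eq
      simpa [r_mul_sr, sr_mul_r, add_comm] using this.symm
    have hm : m = 0 := by
      have h3 : i₀ + m = i₀ - m := by injection heq
      have : m + m = 0 := by linear_combination h3
      exact dih_two_mul_eq_zero hp hpo this
    rw [hm, one_def]
  | sr m =>
    exfalso
    have heq := h2.eq
    rw [sr_mul_r, r_mul_sr] at heq
    have h3 : m + j = m - j := by injection heq
    have : j + j = 0 := by linear_combination h3
    exact hj (dih_two_mul_eq_zero hp hpo this)

theorem dih_sr_comm {p : ℕ} (hp : p.Prime) (hpo : Odd p) {i j : ZMod p}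
    (h : Commute (sr i : DihedralGroup p) (sr j)) : i = j := by
  have heq := h.eq
  rw [sr_mul_sr, sr_mul_sr] at heq
  have h3 : j - i = i - j := by injection heq
  have h4 : (i - j) + (i - j) = 0 := by linear_combination -h3
  have := dih_two_mul_eq_zero hp hpo h4
  linear_combination this

theorem dih_r_comm_sr {p : ℕ} (hp : p.Prime) (hpo : Odd p) {i j : ZMod p}
    (h : Commute (r i : DihedralGroup p) (sr j)) : i = 0 := by
  have heq := h.eq
  rw [r_mul_sr, sr_mul_r] at heq
  have h3 : j - i = j + i := by injection heq
  have : i + i = 0 := by linear_combination -h3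
  exact dih_two_mul_eq_zero hp hpo this

theorem dih_surj_of {p : ℕ} (hp : p.Prime) {M : Type*} [Group M] (f : M →* DihedralGroup p)
    {i₀ j : ZMod p} (hj : j ≠ 0) (hsr : ∃ d, f d = sr i₀) (hr : ∃ d, f d = r j) :
    Function.Surjective f := by
  haveI : Fact p.Prime := ⟨hp⟩
  obtain ⟨d₀, hd₀⟩ := hsr
  obtain ⟨d₁, hd₁⟩ := hr
  have key : ∀ k : ZMod p, ∃ d, f d = r k := by
    intro k
    refine ⟨d₁ ^ ((k * j⁻¹).val), ?_⟩
    rw [map_pow, hd₁, dih_r_pow]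
    congr 1
    rw [nsmul_eq_mul, ZMod.natCast_val, ZMod.cast_id]
    field_simp
  intro y
  cases y with
  | r k => exact key k
  | sr k =>
    obtain ⟨d, hd⟩ := key (k - i₀)
    exact ⟨d₀ * d, by rw [map_mul, hd₀, hd, sr_mul_r, add_sub_cancel]⟩

theorem dih_pow_q_eq_one {p : ℕ} (hp : p.Prime) (hpo : Odd p) {q : ℕ} (hq : q.Prime)
    (hqo : Odd q) (hpq : p ≠ q) {x : DihedralGroup p} (h : x ^ q = 1) : x = 1 := by
  haveI : Fact p.Prime := ⟨hp⟩
  cases x with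
  | r i =>
    rw [dih_r_pow, one_def] at h
    have h2 : ((q : ℕ) : ZMod p) * i = 0 := by
      have : ((q : ℕ) • i) = 0 := by injection h
      simpa [nsmul_eq_mul] using this
    have hqz : ((q : ℕ) : ZMod p) ≠ 0 := by
      rw [Ne, ZMod.natCast_eq_zero_iff]
      intro hdvd
      rcases hq.eq_one_or_self_of_dvd p hdvd with h' | h'
      · exact hp.one_lt.ne' h'
      · exact hpq h'
    rcases mul_eq_zero.mp h2 with h' | h'
    · exact absurd h' hqz
    · rw [h', one_def]
  | sr i =>
    exfalso
    obtain ⟨m, hm⟩ := hqo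
    have h2 : (sr i : DihedralGroup p) ^ 2 = 1 := by
      rw [pow_two, sr_mul_sr, sub_self, one_def]
    have h3 : (sr i : DihedralGroup p) ^ q = sr i := by
      rw [hm, pow_add, pow_mul, h2, one_pow, one_mul, pow_one]
    rw [h3, one_def] at h
    exact nomatch h

end DihedralFacts
section GGammaAPI

open DihedralGroup

variable (p q : ℕ) (V : Type) (R : Set (V × V))

/-- Generic element constructor for `G_Γ`. -/
def mkG (a : V → DihedralGroup p) (c : (r : R) → Multiplicative (ZMod q)) :
    ↥(GGamma p q V R) :=
  ⟨(a, fun r => ⟨c r, (a (r : V × V).1, a (r : V × V).2)⟩), fun _ => rfl⟩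

theorem vProj_apply (v : V) (x : ↥(GGamma p q V R)) : vProj p q V R v x = x.1.1 v := rfl

theorem eProj_apply (r : R) (x : ↥(GGamma p q V R)) : eProj p q V R r x = x.1.2 r := rfl

theorem vProj_mkG (v : V) (a : V → DihedralGroup p) (c : (r : R) → Multiplicative (ZMod q)) :
    vProj p q V R v (mkG p q V R a c) = a v := rfl

theorem eProj_mkG (r : R) (a : V → DihedralGroup p) (c : (r : R) → Multiplicative (ZMod q)) :
    eProj p q V R r (mkG p q V R a c) = ⟨c r, (a (r : V × V).1, a (r : V × V).2)⟩ := rfl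

theorem mkG_eta (x : ↥(GGamma p q V R)) :
    x = mkG p q V R (x.1.1) (fun r => (x.1.2 r).left) := by
  apply Subtype.ext
  apply Prod.ext
  · rfl
  · funext r
    apply SemidirectProduct.ext
    · rfl
    · exact (x.2 r)

/-- The section `D_p^V → G_Γ`. -/
def sV : (V → DihedralGroup p) →* ↥(GGamma p q V R) where
  toFun a := mkG p q V R a 1
  map_one' := by
    apply Subtype.ext
    apply Prod.ext
    · rfl
    · funext r
      apply SemidirectProduct.ext <;> rfl
  map_mul' a a' := by
    apply Subtype.ext
    apply Prod.ext
    · rfl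
    · funext r
      apply SemidirectProduct.ext
      · show (1 : Multiplicative (ZMod q)) = 1 * (Wact p q _) 1
        simp
      · rfl

/-- The section `C_q^R → G_Γ`. -/
def kC : ((r : R) → Multiplicative (ZMod q)) →* ↥(GGamma p q V R) where
  toFun c := mkG p q V R 1 c
  map_one' := rfl
  map_mul' c c' := by
    apply Subtype.ext
    apply Prod.ext
    · show (1 : V → DihedralGroup p) = 1 * 1
      simp
    · funext r
      apply SemidirectProduct.ext
      · show c r * c' r = c r * (Wact p q 1) (c' r)
        simp
      · show (1 : DihedralGroup p × DihedralGroup p) = 1 * 1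
        simp

theorem mkG_decomp (a : V → DihedralGroup p) (c : (r : R) → Multiplicative (ZMod q)) :
    mkG p q V R a c = kC p q V R c * sV p q V R a := by
  apply Subtype.ext
  apply Prod.ext
  · funext v
    show a v = 1 * a v
    simp
  · funext r
    apply SemidirectProduct.ext
    · show c r = c r * (Wact p q 1) 1
      simp
    · show (a (r : V × V).1, a (r : V × V).2) = 1 * (a (r : V × V).1, a (r : V × V).2)
      simp

end GGammaAPI
section GGammaAPI2

open DihedralGroup

variable (p q : ℕ) (V : Type) (R : Set (V × V))

theorem W_eta (w : Wgrp p q) : w = ⟨w.left, w.right⟩ := by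
  apply SemidirectProduct.ext <;> rfl

theorem W_rightHom (w : Wgrp p q) : SemidirectProduct.rightHom w = w.right := rfl

theorem Wact_apply (h : DihedralGroup p × DihedralGroup p) (c : Multiplicative (ZMod q)) :
    (Wact p q h) c = c ^ (((dihedralSign p h.1 * dihedralSign p h.2 : ℤˣ) : ℤ)) := rfl

theorem mkG_mul (a a' : V → DihedralGroup p) (c c' : (r : R) → Multiplicative (ZMod q)) :
    mkG p q V R a c * mkG p q V R a' c' =
      mkG p q V R (a * a')
        (fun r => c r * (Wact p q (a (r : V × V).1, a (r : V × V).2)) (c' r)) := by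
  apply Subtype.ext
  apply Prod.ext
  · rfl
  · funext r
    apply SemidirectProduct.ext
    · rfl
    · rfl

variable [DecidableEq V] [DecidableEq ↥R]

/-- The section `D_p → G_Γ` at a vertex `v`. -/
def iV (v : V) : DihedralGroup p →* ↥(GGamma p q V R) :=
  (sV p q V R).comp (MonoidHom.mulSingle (fun _ : V => DihedralGroup p) v)

theorem iV_apply (v : V) (d : DihedralGroup p) :
    iV p q V R v d = mkG p q V R (Pi.mulSingle v d) 1 := rfl

theorem vProj_iV (v : V) (d : DihedralGroup p) :
    vProj p q V R v (iV p q V R v d) = d := by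
  show (Pi.mulSingle v d : V → DihedralGroup p) v = d
  simp

theorem vProj_surjective (v : V) : Function.Surjective (vProj p q V R v) :=
  fun d => ⟨iV p q V R v d, vProj_iV p q V R v d⟩

variable {V R}

/-- The vertex data associated to an edge value. -/
def eWa (r : R) (h : DihedralGroup p × DihedralGroup p) : V → DihedralGroup p :=
  fun v => if v = (r : V × V).1 then h.1 else if v = (r : V × V).2 then h.2 else 1

omit [DecidableEq ↥R] in
theorem eWa_mul (r : R) (hne : (r : V × V).1 ≠ (r : V × V).2)
    (h h' : DihedralGroup p × DihedralGroup p) :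
    eWa p (r := r) (h * h') = eWa p (r := r) h * eWa p (r := r) h' := by
  funext v
  unfold eWa
  by_cases h1 : v = (r : V × V).1
  · simp [h1]
  · by_cases h2 : v = (r : V × V).2 <;> simp [h1, h2, Ne.symm hne]

omit [DecidableEq ↥R] in
theorem eWa_fst (r : R) (h : DihedralGroup p × DihedralGroup p) :
    eWa p (r := r) h ((r : V × V).1) = h.1 := by
  unfold eWa; simp

omit [DecidableEq ↥R] in
theorem eWa_snd (r : R) (hne : (r : V × V).1 ≠ (r : V × V).2)
    (h : DihedralGroup p × DihedralGroup p) : eWa p (r := r) h ((r : V × V).2) = h.2 := by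
  unfold eWa
  rw [if_neg (Ne.symm hne), if_pos rfl]

/-- The section `W → G_Γ` at an edge `r` (needs that `r` is not a loop). -/
def eW (r : R) (hne : (r : V × V).1 ≠ (r : V × V).2) : Wgrp p q →* ↥(GGamma p q V R) :=
  MonoidHom.mk'
    (fun w => mkG p q V R (eWa p (r := r) w.right) (Pi.mulSingle r w.left))
    (by
      intro w w'
      rw [SemidirectProduct.mul_right, mkG_mul, eWa_mul p r hne]
      congr 1
      funext s
      rcases eq_or_ne s r with hsr | hsr
      · subst hsr
        rw [SemidirectProduct.mul_left]
        simp only [Pi.mulSingle_eq_same]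
        rw [eWa_fst p s, eWa_snd p s hne]
      · rw [Pi.mulSingle_eq_of_ne hsr, Pi.mulSingle_eq_of_ne hsr, Pi.mulSingle_eq_of_ne hsr]
        simp)

theorem eW_apply (r : R) (hne : (r : V × V).1 ≠ (r : V × V).2) (w : Wgrp p q) :
    eW p q r hne w = mkG p q V R (eWa p (r := r) w.right) (Pi.mulSingle r w.left) := rfl

theorem eProj_eW (r : R) (hne : (r : V × V).1 ≠ (r : V × V).2) (w : Wgrp p q) :
    eProj p q V R r (eW p q r hne w) = w := by
  rw [eW_apply, eProj_mkG, Pi.mulSingle_eq_same, eWa_fst p r, eWa_snd p r hne]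

theorem eProj_surjective (r : R) (hne : (r : V × V).1 ≠ (r : V × V).2) :
    Function.Surjective (eProj p q V R r) :=
  fun w => ⟨eW p q r hne w, eProj_eW p q r hne w⟩

end GGammaAPI2
section ClassHelpers

open DihedralGroup

/-- The subgroup `{1, sr i₀}` of `D_p`. -/
def srSub (p : ℕ) (i₀ : ZMod p) : Subgroup (DihedralGroup p) where
  carrier := {1, sr i₀}
  one_mem' := Or.inl rfl
  mul_mem' := by
    rintro a b (rfl | ha) (rfl | hb)
    · exact Or.inl (one_mul 1)
    · right; rw [one_mul]; exact hb
    · right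
      rw [Set.mem_singleton_iff] at ha
      rw [ha, mul_one]
      exact rfl
    · left
      rw [Set.mem_singleton_iff] at ha hb
      rw [ha, hb, sr_mul_sr, sub_self, one_def]
  inv_mem' := by
    rintro a (rfl | ha)
    · exact Or.inl inv_one
    · right
      rw [Set.mem_singleton_iff] at ha
      subst ha
      rw [Set.mem_singleton_iff]
      apply inv_eq_of_mul_eq_one_right
      rw [sr_mul_sr, sub_self, one_def]

theorem mem_srSub {p : ℕ} {i₀ : ZMod p} {x : DihedralGroup p} :
    x ∈ srSub p i₀ ↔ x = 1 ∨ x = sr i₀ := Iff.rfl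

theorem dih_end_injective {p : ℕ} (hp : p.Prime)
    (α : DihedralGroup p →* DihedralGroup p) (h : Function.Surjective α) :
    Function.Injective α := by
  haveI : NeZero p := ⟨hp.pos.ne'⟩
  exact Finite.injective_iff_surjective.mpr h

variable {p q : ℕ} {V : Type} {R : Set (V × V)} [DecidableEq V] [DecidableEq ↥R]
variable {M : Type*} [Group M]

theorem multZMod_pow_card (z : Multiplicative (ZMod q)) : z ^ q = 1 := by
  apply Multiplicative.toAdd.injective
  rw [toAdd_pow, nsmul_eq_mul, ZMod.natCast_self, zero_mul]
  rfl

theorem multZMod_pow (hq : q.Prime) {n : ℕ} (hnd : ¬ (q ∣ n))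
    {z : Multiplicative (ZMod q)} (h : z ^ n = 1) : z = 1 := by
  haveI : Fact q.Prime := ⟨hq⟩
  have h1 : (n : ℕ) • z.toAdd = 0 := by
    have := congrArg Multiplicative.toAdd h
    simpa using this
  have h2 : ((n : ℕ) : ZMod q) * z.toAdd = 0 := by
    simpa [nsmul_eq_mul] using h1
  have hnz : ((n : ℕ) : ZMod q) ≠ 0 := by
    rw [Ne, ZMod.natCast_eq_zero_iff]
    exact hnd
  rcases mul_eq_zero.mp h2 with h' | h'
  · exact absurd h' hnz
  · have h3 : z.toAdd = (1 : Multiplicative (ZMod q)).toAdd := by simpa using h'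
    exact Multiplicative.toAdd.injective h3

theorem multZMod_gen (hq : q.Prime) {z : Multiplicative (ZMod q)} (hz : z ≠ 1)
    (f : Multiplicative (ZMod q) →* M) (hfz : f z = 1) (z' : Multiplicative (ZMod q)) :
    f z' = 1 := by
  haveI : Fact q.Prime := ⟨hq⟩
  have hz0 : z.toAdd ≠ 0 := by
    intro h
    apply hz
    apply Multiplicative.toAdd.injective
    simpa using h
  have key : z' = z ^ ((z'.toAdd * z.toAdd⁻¹).val) := by
    apply Multiplicative.toAdd.injective
    rw [toAdd_pow, nsmul_eq_mul, ZMod.natCast_val, ZMod.cast_id]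
    field_simp
  rw [key, map_pow, hfz, one_pow]

theorem psi_decomp (ψ : ↥(GGamma p q V R) →* M) (x : ↥(GGamma p q V R)) :
    ψ x = ψ (kC p q V R (fun r => (x.1.2 r).left)) * ψ (sV p q V R x.1.1) := by
  conv_lhs => rw [mkG_eta p q V R x]
  show ψ (mkG p q V R _ _) = _
  rw [mkG_decomp, map_mul]

theorem kill_sV (ψ : ↥(GGamma p q V R) →* M) (S : Finset V) (T : Finset ↥R)
    (hST : ∀ r ∈ T, (r : V × V).1 ∈ S ∧ (r : V × V).2 ∈ S)
    (hker : ∀ x : ↥(GGamma p q V R),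
      (∀ v ∈ S, x.1.1 v = 1) → (∀ r ∈ T, x.1.2 r = 1) → ψ x = 1)
    (a : V → DihedralGroup p) (ha : ∀ v ∈ S, a v = 1) : ψ (sV p q V R a) = 1 := by
  apply hker
  · exact ha
  · intro r hr
    show (⟨1, (a (r : V × V).1, a (r : V × V).2)⟩ : Wgrp p q) = 1
    rw [ha _ (hST r hr).1, ha _ (hST r hr).2]
    rfl

theorem kill_kC (ψ : ↥(GGamma p q V R) →* M) (S : Finset V) (T : Finset ↥R)
    (hker : ∀ x : ↥(GGamma p q V R),
      (∀ v ∈ S, x.1.1 v = 1) → (∀ r ∈ T, x.1.2 r = 1) → ψ x = 1)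
    (c : (r : ↥R) → Multiplicative (ZMod q)) (hc : ∀ r ∈ T, c r = 1) :
    ψ (kC p q V R c) = 1 := by
  apply hker
  · intro v _; rfl
  · intro r hr
    show (⟨c r, (1, 1)⟩ : Wgrp p q) = 1
    rw [hc _ hr]
    rfl

theorem trunc_sV (ψ : ↥(GGamma p q V R) →* M) (S : Finset V) (T : Finset ↥R)
    (hST : ∀ r ∈ T, (r : V × V).1 ∈ S ∧ (r : V × V).2 ∈ S)
    (hker : ∀ x : ↥(GGamma p q V R),
      (∀ v ∈ S, x.1.1 v = 1) → (∀ r ∈ T, x.1.2 r = 1) → ψ x = 1)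
    (a : V → DihedralGroup p) :
    ψ (sV p q V R a) = ψ (sV p q V R (fun v => if v ∈ S then a v else 1)) := by
  have hdec : a = (fun v => if v ∈ S then a v else 1) * (fun v => if v ∈ S then 1 else a v) := by
    funext v
    by_cases h : v ∈ S <;> simp [h]
  conv_lhs => rw [hdec]
  rw [map_mul, map_mul, kill_sV ψ S T hST hker _ (fun v hv => if_pos hv), mul_one]

theorem trunc_kC (ψ : ↥(GGamma p q V R) →* M) (S : Finset V) (T : Finset ↥R)
    (hker : ∀ x : ↥(GGamma p q V R),
      (∀ v ∈ S, x.1.1 v = 1) → (∀ r ∈ T, x.1.2 r = 1) → ψ x = 1)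
    (c : (r : ↥R) → Multiplicative (ZMod q)) :
    ψ (kC p q V R c) = ψ (kC p q V R (fun r => if r ∈ T then c r else 1)) := by
  have hdec : c = (fun r => if r ∈ T then c r else 1) * (fun r => if r ∈ T then 1 else c r) := by
    funext r
    by_cases h : r ∈ T <;> simp [h]
  conv_lhs => rw [hdec]
  rw [map_mul, map_mul, kill_kC ψ S T hker _ (fun r hr => if_pos hr), mul_one]

theorem classA_core (hp : p.Prime) (hpo : Odd p) (hq : q.Prime) (hqo : Odd q) (hpq : p ≠ q)
    (ψ : ↥(GGamma p q V R) →* DihedralGroup p) (hsurj : Function.Surjective ψ)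
    (S : Finset V) (T : Finset ↥R)
    (hST : ∀ r ∈ T, (r : V × V).1 ∈ S ∧ (r : V × V).2 ∈ S)
    (hker : ∀ x : ↥(GGamma p q V R),
      (∀ v ∈ S, x.1.1 v = 1) → (∀ r ∈ T, x.1.2 r = 1) → ψ x = 1) :
    ∃ (v₀ : V) (F : DihedralGroup p →* DihedralGroup p), Function.Surjective F ∧
      ∀ x, ψ x = F (vProj p q V R v₀ x) := by
  haveI : NeZero p := ⟨hp.pos.ne'⟩
  have hkC : ∀ c, ψ (kC p q V R c) = 1 := by
    intro c
    apply dih_pow_q_eq_one hp hpo hq hqo hpq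
    rw [← map_pow, ← map_pow]
    have hc : c ^ q = 1 := funext fun r => multZMod_pow_card (c r)
    rw [hc, map_one, map_one]
  set ψs := ψ.comp (sV p q V R) with hψsdef
  have hψsa : ∀ a, ψs a = ψ (sV p q V R a) := fun _ => rfl
  have hfac : ∀ x, ψ x = ψs (x.1.1) := by
    intro x
    rw [psi_decomp ψ x, hkC, one_mul, hψsa]
  set F : V → (DihedralGroup p →* DihedralGroup p) :=
    fun v => ψs.comp (MonoidHom.mulSingle (fun _ : V => DihedralGroup p) v) with hFdef
  have hFapp : ∀ v d, F v d = ψs (Pi.mulSingle v d) := fun _ _ => rfl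
  have hcomm : ∀ v w, v ≠ w → ∀ d d', Commute (F v d) (F w d') := by
    intro v w hvw d d'
    exact (Pi.mulSingle_commute hvw d d').map ψs
  have htrunc : ∀ a, ψs a = ψs (fun v => if v ∈ S then a v else 1) := by
    intro a
    rw [hψsa, hψsa]
    exact trunc_sV ψ S T hST hker a
  have hoffS : ∀ v, v ∉ S → ∀ d, F v d = 1 := by
    intro v hv d
    rw [hFapp, hψsa]
    apply kill_sV ψ S T hST hker _
    intro w hw
    apply Pi.mulSingle_eq_of_ne
    intro hwv
    exact hv (by rwa [hwv] at hw)
  have hbound : ∀ (Q' : Subgroup (DihedralGroup p)), (∀ v d, F v d ∈ Q') →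
      ∀ a, ψs a ∈ Q' := by
    intro Q' hQ a
    rw [htrunc a]
    exact pi_mem_single (Subgroup.comap ψs Q') S (fun v => if v ∈ S then a v else 1)
      (fun v hv => if_neg hv) (fun v => hQ v _)
  have hcollapse : ∀ v₀, v₀ ∈ S → (∀ w, w ≠ v₀ → ∀ d, F w d = 1) →
      ∀ a, ψs a = F v₀ (a v₀) := by
    intro v₀ hv₀S hw a
    rw [htrunc a]
    have key := pi_mem_single (MonoidHom.eqLocus ψs ((F v₀).comp (Pi.evalMonoidHom _ v₀))) S
      (fun v => if v ∈ S then a v else 1) (fun v hv => if_neg hv) ?singles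
    case singles =>
      intro v
      have hv1 : ψs (Pi.mulSingle v ((fun u => if u ∈ S then a u else 1) v))
          = ((F v₀).comp (Pi.evalMonoidHom (fun _ : V => DihedralGroup p) v₀))
            (Pi.mulSingle v ((fun u => if u ∈ S then a u else 1) v)) := by
        simp only [MonoidHom.comp_apply, Pi.evalMonoidHom_apply]
        rcases eq_or_ne v v₀ with rfl | hv
        · rw [Pi.mulSingle_eq_same]
          rfl
        · rw [Pi.mulSingle_eq_of_ne (Ne.symm hv), map_one]
          exact hw v hv _
      exact hv1
    have key2 : ψs (fun v => if v ∈ S then a v else 1)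
        = F v₀ (if v₀ ∈ S then a v₀ else 1) := key
    rw [key2, if_pos hv₀S]
  by_cases hrefl : ∃ v d i, F v d = sr i
  · obtain ⟨v₀, d₀, i₀, h₀⟩ := hrefl
    by_cases hrot : ∃ d j, F v₀ d = r j ∧ j ≠ 0
    · obtain ⟨d₁, j₁, hj, hj0⟩ := hrot
      have hFsurj : Function.Surjective (F v₀) :=
        dih_surj_of hp (F v₀) hj0 ⟨d₀, h₀⟩ ⟨d₁, hj⟩
      have hw : ∀ w, w ≠ v₀ → ∀ d, F w d = 1 := by
        intro w hwv d
        apply dih_central hp hpo hj0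
        · rw [← h₀]; exact hcomm w v₀ hwv d d₀
        · rw [← hj]; exact hcomm w v₀ hwv d d₁
      have hv₀S : v₀ ∈ S := by
        by_contra hv
        obtain ⟨d, hd⟩ := hFsurj (sr 0)
        rw [hoffS v₀ hv d] at hd
        rw [one_def] at hd
        exact nomatch hd
      refine ⟨v₀, F v₀, hFsurj, fun x => ?_⟩
      rw [hfac x, hcollapse v₀ hv₀S hw x.1.1]
      rfl
    · have hrot' : ∀ d j, F v₀ d = r j → j = 0 := by
        intro d j h
        by_contra hj
        exact hrot ⟨d, j, h, hj⟩
      exfalso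
      have hZ : ∀ v d, F v d ∈ srSub p i₀ := by
        intro v d
        rcases eq_or_ne v v₀ with rfl | hv
        · rw [mem_srSub]
          cases h : F v d with
          | r j =>
            left
            rw [hrot' d j h, one_def]
          | sr m =>
            right
            have h2 : F v (d * d₀) = r (i₀ - m) := by
              rw [map_mul, h, h₀, sr_mul_sr]
            have h3 := hrot' _ _ h2
            have hm : m = i₀ := by linear_combination -h3
            rw [hm]
        · rw [mem_srSub]
          have hcom : Commute (F v d) (sr i₀) := by
            rw [← h₀]; exact hcomm v v₀ hv d d₀
          cases h : F v d with
          | r m =>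
            left
            rw [h] at hcom
            rw [dih_r_comm_sr hp hpo hcom, one_def]
          | sr m =>
            right
            rw [h] at hcom
            rw [dih_sr_comm hp hpo hcom]
      obtain ⟨x, hx⟩ := hsurj (r 1)
      have hin := hbound (srSub p i₀) hZ x.1.1
      rw [← hfac, hx, mem_srSub] at hin
      rcases hin with h1 | h1
      · rw [one_def] at h1
        have : (1 : ZMod p) = 0 := by injection h1
        exact dih_one_ne_zero hp this
      · exact nomatch h1
  · exfalso
    have hb : ∀ a, ψs a ∈ (dihedralSign p).ker := by
      apply hbound
      intro v d
      rw [MonoidHom.mem_ker]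
      cases h : F v d with
      | r j => rfl
      | sr j => exact absurd ⟨v, d, j, h⟩ hrefl
    obtain ⟨x, hx⟩ := hsurj (sr 0)
    have hin := hb x.1.1
    rw [← hfac, hx, MonoidHom.mem_ker] at hin
    exact absurd (show (-1 : ℤˣ) = 1 from hin) (by decide)

theorem classA (hp : p.Prime) (hpo : Odd p) (hq : q.Prime) (hqo : Odd q) (hpq : p ≠ q)
    (ψ : ↥(GGamma p q V R) →* DihedralGroup p) (hsurj : Function.Surjective ψ)
    (S : Finset V) (T : Finset ↥R)
    (hST : ∀ r ∈ T, (r : V × V).1 ∈ S ∧ (r : V × V).2 ∈ S)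
    (hker : ∀ x : ↥(GGamma p q V R),
      (∀ v ∈ S, x.1.1 v = 1) → (∀ r ∈ T, x.1.2 r = 1) → ψ x = 1) :
    ∃ v₀, ψ.ker = (vProj p q V R v₀).ker := by
  obtain ⟨v₀, F, hFs, hfor⟩ := classA_core hp hpo hq hqo hpq ψ hsurj S T hST hker
  have hFi : Function.Injective F := dih_end_injective hp F hFs
  refine ⟨v₀, ?_⟩
  ext x
  simp only [MonoidHom.mem_ker]
  rw [hfor x]
  constructor
  · intro h
    exact hFi (by rw [h, map_one])
  · intro h
    rw [h, map_one]

end ClassHelpers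
section ClassB

open DihedralGroup

variable {p q : ℕ} {V : Type} {R : Set (V × V)} [DecidableEq V] [DecidableEq ↥R]

theorem W_of_right_one {y : Wgrp p q} (h : y.right = 1) : y = SemidirectProduct.inl y.left := by
  apply SemidirectProduct.ext
  · rw [SemidirectProduct.left_inl]
  · rw [SemidirectProduct.right_inl, h]

theorem W_left_triv (hq : q.Prime) {y : Wgrp p q} (hr : y.right = 1) {n : ℕ}
    (hnd : ¬ (q ∣ n)) (h : y ^ n = 1) : y = 1 := by
  have hy := W_of_right_one (p := p) hr
  rw [hy, ← map_pow] at h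
  have h2 : y.left ^ n = 1 := SemidirectProduct.inl_injective (by rw [h, map_one])
  rw [hy, multZMod_pow hq hnd h2, map_one]

theorem W_comm_inl {z : Multiplicative (ZMod q)} {y : Wgrp p q}
    (h : Commute (SemidirectProduct.inl z) y) : (Wact p q y.right) z = z := by
  have heq := h.eq
  have hleft := congrArg SemidirectProduct.left heq
  rw [SemidirectProduct.mul_left, SemidirectProduct.mul_left, SemidirectProduct.left_inl,
    SemidirectProduct.right_inl, map_one, MulAut.one_apply] at hleft
  rw [mul_comm z y.left] at hleft
  exact (mul_left_cancel hleft).symm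

theorem classB (hp : p.Prime) (hpo : Odd p) (hq : q.Prime) (hqo : Odd q) (hpq : p ≠ q)
    (hloop : ∀ v : V, (v, v) ∉ R) (hor : ∀ a b : V, (a, b) ∈ R → (b, a) ∉ R)
    (ψ : ↥(GGamma p q V R) →* Wgrp p q) (hsurj : Function.Surjective ψ)
    (S : Finset V) (T : Finset ↥R)
    (hST : ∀ r ∈ T, (r : V × V).1 ∈ S ∧ (r : V × V).2 ∈ S)
    (hker : ∀ x : ↥(GGamma p q V R),
      (∀ v ∈ S, x.1.1 v = 1) → (∀ r ∈ T, x.1.2 r = 1) → ψ x = 1) :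
    ∃ r₀, ψ.ker = (eProj p q V R r₀).ker := by
  haveI : NeZero p := ⟨hp.pos.ne'⟩
  haveI : Fact q.Prime := ⟨hq⟩
  have hqp : ¬ (q ∣ p) := fun h => hpq ((Nat.prime_dvd_prime_iff_eq hq hp).mp h).symm
  have hq2 : ¬ (q ∣ 2) := fun h => by
    have := (Nat.prime_dvd_prime_iff_eq hq Nat.prime_two).mp h
    subst this
    exact (by decide : ¬ Odd 2) hqo
  -- edge loops are excluded
  have hne : ∀ r : ↥R, (r : V × V).1 ≠ (r : V × V).2 := by
    intro r hr12
    have hmem : ((r : V × V).1, (r : V × V).2) ∈ R := r.2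
    rw [← hr12] at hmem
    exact hloop _ hmem
  -- basic homs
  set ψκ : ((r : ↥R) → Multiplicative (ZMod q)) →* Wgrp p q := ψ.comp (kC p q V R) with hψκdef
  set ψs : (V → DihedralGroup p) →* Wgrp p q := ψ.comp (sV p q V R) with hψsdef
  set χ : (r : ↥R) → Multiplicative (ZMod q) →* Wgrp p q :=
    fun r => ψκ.comp (MonoidHom.mulSingle (fun _ : ↥R => Multiplicative (ZMod q)) r) with hχdef
  set Fv : V → (DihedralGroup p →* Wgrp p q) :=
    fun v => ψs.comp (MonoidHom.mulSingle (fun _ : V => DihedralGroup p) v) with hFvdef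
  have hfac : ∀ x, ψ x = ψκ (fun r => (x.1.2 r).left) * ψs x.1.1 := fun x => psi_decomp ψ x
  -- χ values have trivial right component
  have hχright : ∀ r c, (χ r c).right = 1 := by
    intro r c
    have h1 : (χ r c) ^ q = 1 := by
      rw [← map_pow, multZMod_pow_card, map_one]
    have h2 : ((χ r c).right) ^ q = 1 := by
      have h1' := congrArg SemidirectProduct.rightHom h1
      rw [map_pow, map_one] at h1'
      exact h1'
    have h3 : ((χ r c).right.1) ^ q = 1 := by rw [← Prod.pow_fst, h2, Prod.fst_one]
    have h4 : ((χ r c).right.2) ^ q = 1 := by rw [← Prod.pow_snd, h2, Prod.snd_one]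
    have e1 := dih_pow_q_eq_one hp hpo hq hqo hpq h3
    have e2 := dih_pow_q_eq_one hp hpo hq hqo hpq h4
    exact Prod.ext e1 e2
  -- the two distinguished vertex coordinates
  have hFstker : ∀ x : ↥(GGamma p q V R),
      (∀ v ∈ S, x.1.1 v = 1) → (∀ r ∈ T, x.1.2 r = 1) →
        ((MonoidHom.fst _ _).comp (SemidirectProduct.rightHom.comp ψ)) x = 1 := by
    intro x h1 h2
    show (SemidirectProduct.rightHom (ψ x)).1 = 1
    rw [hker x h1 h2, map_one]
    rfl
  have hSndker : ∀ x : ↥(GGamma p q V R),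
      (∀ v ∈ S, x.1.1 v = 1) → (∀ r ∈ T, x.1.2 r = 1) →
        ((MonoidHom.snd _ _).comp (SemidirectProduct.rightHom.comp ψ)) x = 1 := by
    intro x h1 h2
    show (SemidirectProduct.rightHom (ψ x)).2 = 1
    rw [hker x h1 h2, map_one]
    rfl
  obtain ⟨v₁, α₁, hα₁s, hα₁⟩ := classA_core hp hpo hq hqo hpq
    ((MonoidHom.fst _ _).comp (SemidirectProduct.rightHom.comp ψ))
    (fun d => by
      obtain ⟨x, hx⟩ := hsurj ⟨1, (d, 1)⟩
      exact ⟨x, by show (SemidirectProduct.rightHom (ψ x)).1 = d; rw [hx]; rfl⟩)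
    S T hST hFstker
  obtain ⟨v₂, α₂, hα₂s, hα₂⟩ := classA_core hp hpo hq hqo hpq
    ((MonoidHom.snd _ _).comp (SemidirectProduct.rightHom.comp ψ))
    (fun d => by
      obtain ⟨x, hx⟩ := hsurj ⟨1, (1, d)⟩
      exact ⟨x, by show (SemidirectProduct.rightHom (ψ x)).2 = d; rw [hx]; rfl⟩)
    S T hST hSndker
  have hα₁i : Function.Injective α₁ := dih_end_injective hp α₁ hα₁s
  have hα₂i : Function.Injective α₂ := dih_end_injective hp α₂ hα₂s
  have hψright1 : ∀ x, (ψ x).right.1 = α₁ (x.1.1 v₁) := fun x => hα₁ x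
  have hψright2 : ∀ x, (ψ x).right.2 = α₂ (x.1.1 v₂) := fun x => hα₂ x
  have hv12 : v₁ ≠ v₂ := by
    intro h12
    obtain ⟨x, hx⟩ := hsurj ⟨1, (1, sr 0)⟩
    have e1 : α₁ (x.1.1 v₁) = 1 := by rw [← hψright1, hx]
    have e2 : α₂ (x.1.1 v₂) = sr 0 := by rw [← hψright2, hx]
    have : x.1.1 v₁ = 1 := hα₁i (by rw [e1, map_one])
    rw [← h12, this, map_one] at e2
    rw [one_def] at e2
    exact nomatch e2
  -- Fv basic values
  have hFvapp : ∀ w d, Fv w d = ψ (sV p q V R (Pi.mulSingle w d)) := fun _ _ => rfl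
  have hFvright : ∀ w d, (Fv w d).right =
      (α₁ ((Pi.mulSingle w d : V → DihedralGroup p) v₁),
       α₂ ((Pi.mulSingle w d : V → DihedralGroup p) v₂)) := by
    intro w d
    apply Prod.ext
    · rw [hFvapp]; exact hψright1 (sV p q V R (Pi.mulSingle w d))
    · rw [hFvapp]; exact hψright2 (sV p q V R (Pi.mulSingle w d))
  have hFv1right : ∀ d, (Fv v₁ d).right = (α₁ d, 1) := by
    intro d
    rw [hFvright]
    rw [Pi.mulSingle_eq_same, Pi.mulSingle_eq_of_ne (Ne.symm hv12), map_one]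
  have hFv2right : ∀ d, (Fv v₂ d).right = (1, α₂ d) := by
    intro d
    rw [hFvright]
    rw [Pi.mulSingle_eq_same, Pi.mulSingle_eq_of_ne hv12, map_one]
  -- other vertex coordinates die
  have hFw1 : ∀ w, w ≠ v₁ → w ≠ v₂ → ∀ d, Fv w d = 1 := by
    intro w h1 h2 d
    have hright : (Fv w d).right = 1 := by
      rw [hFvright, Pi.mulSingle_eq_of_ne (Ne.symm h1), Pi.mulSingle_eq_of_ne (Ne.symm h2),
        map_one, map_one]
      rfl
    cases d with
    | r i =>
      apply W_left_triv hq hright hqp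
      rw [← map_pow]
      have : (r i : DihedralGroup p) ^ p = 1 := by
        rw [dih_r_pow, nsmul_eq_mul, ZMod.natCast_self, zero_mul, one_def]
      rw [this, map_one]
    | sr i =>
      apply W_left_triv hq hright hq2
      rw [← map_pow]
      have : (sr i : DihedralGroup p) ^ 2 = 1 := by
        rw [pow_two, sr_mul_sr, sub_self, one_def]
      rw [this, map_one]
  -- v₁ and v₂ lie in S
  have hv₁S : v₁ ∈ S := by
    by_contra hv
    obtain ⟨d, hd⟩ := hα₁s (sr 0)
    have : Fv v₁ d = 1 := by
      rw [hFvapp]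
      apply kill_sV ψ S T hST hker
      intro w hw
      apply Pi.mulSingle_eq_of_ne
      intro hwv
      exact hv (by rwa [hwv] at hw)
    have h2 := hFv1right d
    rw [this, hd] at h2
    have h3 : (sr 0 : DihedralGroup p) = 1 := (congrArg Prod.fst h2).symm
    rw [one_def] at h3
    exact nomatch h3
  have hv₂S : v₂ ∈ S := by
    by_contra hv
    obtain ⟨d, hd⟩ := hα₂s (sr 0)
    have : Fv v₂ d = 1 := by
      rw [hFvapp]
      apply kill_sV ψ S T hST hker
      intro w hw
      apply Pi.mulSingle_eq_of_ne
      intro hwv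
      exact hv (by rwa [hwv] at hw)
    have h2 := hFv2right d
    rw [this, hd] at h2
    have h3 : (sr 0 : DihedralGroup p) = 1 := (congrArg Prod.snd h2).symm
    rw [one_def] at h3
    exact nomatch h3
  -- two-point collapse of ψs
  have hc12 : ∀ d d', Commute (Fv v₁ d) (Fv v₂ d') := by
    intro d d'
    exact (Pi.mulSingle_commute hv12 d d').map ψs
  have hcoll2 : ∀ a, ψs a = Fv v₁ (a v₁) * Fv v₂ (a v₂) := by
    intro a
    have htr : ψs a = ψs (fun v => if v ∈ S then a v else 1) := trunc_sV ψ S T hST hker a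
    set G12 : (V → DihedralGroup p) →* Wgrp p q :=
      (MonoidHom.noncommCoprod (Fv v₁) (Fv v₂) hc12).comp
        ((Pi.evalMonoidHom (fun _ : V => DihedralGroup p) v₁).prod
          (Pi.evalMonoidHom (fun _ : V => DihedralGroup p) v₂)) with hG12def
    have hG12 : ∀ b, G12 b = Fv v₁ (b v₁) * Fv v₂ (b v₂) := by
      intro b
      rw [hG12def]
      rw [MonoidHom.comp_apply, MonoidHom.prod_apply, MonoidHom.noncommCoprod_apply]
      rfl
    have key := pi_mem_single (MonoidHom.eqLocus ψs G12) S
      (fun v => if v ∈ S then a v else 1) (fun v hv => if_neg hv) ?singles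
    case singles =>
      intro v
      have hv1 : ψs (Pi.mulSingle v ((fun u => if u ∈ S then a u else 1) v))
          = G12 (Pi.mulSingle v ((fun u => if u ∈ S then a u else 1) v)) := by
        rw [hG12]
        rcases eq_or_ne v v₁ with rfl | h1
        · rw [Pi.mulSingle_eq_same, Pi.mulSingle_eq_of_ne (Ne.symm hv12), map_one, mul_one]
          rfl
        · rcases eq_or_ne v v₂ with rfl | h2
          · rw [Pi.mulSingle_eq_same, Pi.mulSingle_eq_of_ne hv12, map_one, one_mul]
            rfl
          · rw [Pi.mulSingle_eq_of_ne (Ne.symm h1), Pi.mulSingle_eq_of_ne (Ne.symm h2),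
              map_one, map_one, one_mul]
            exact hFw1 v h1 h2 _
      exact hv1
    have key2 : ψs (fun v => if v ∈ S then a v else 1)
        = G12 (fun v => if v ∈ S then a v else 1) := key
    rw [htr, key2, hG12, if_pos hv₁S, if_pos hv₂S]
  -- some χ is nontrivial
  have hsomeχ : ∃ (r : ↥R) (c : Multiplicative (ZMod q)), χ r c ≠ 1 := by
    by_contra hall
    push_neg at hall
    have hψκ1 : ∀ c, ψκ c = 1 := by
      intro c
      have htr : ψκ c = ψκ (fun r => if r ∈ T then c r else 1) := trunc_kC ψ S T hker c
      rw [htr]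
      have := pi_mem_single (ψκ.ker) T (fun r => if r ∈ T then c r else 1)
        (fun r hr => if_neg hr) (fun r => hall r _)
      exact this
    have hsurj2 : Function.Surjective
        (fun z : DihedralGroup p × DihedralGroup p => Fv v₁ z.1 * Fv v₂ z.2) := by
      intro y
      obtain ⟨x, hx⟩ := hsurj y
      refine ⟨(x.1.1 v₁, x.1.1 v₂), ?_⟩
      rw [← hx, hfac x, hψκ1, one_mul, hcoll2]
    haveI : Finite (DihedralGroup p × DihedralGroup p) := inferInstance
    have hle := Nat.card_le_card_of_surjective _ hsurj2
    have hcardW : Nat.card (Wgrp p q)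
        = q * Nat.card (DihedralGroup p × DihedralGroup p) := by
      have e : Wgrp p q ≃ (Multiplicative (ZMod q) × (DihedralGroup p × DihedralGroup p)) :=
        ⟨fun w => (w.left, w.right), fun z => ⟨z.1, z.2⟩,
          fun w => by apply SemidirectProduct.ext <;> rfl, fun z => rfl⟩
      rw [Nat.card_congr e, Nat.card_prod]
      congr 1
      rw [Nat.card_congr (Multiplicative.toAdd (α := ZMod q) :), Nat.card_zmod]
    have hpos : 0 < Nat.card (DihedralGroup p × DihedralGroup p) := Nat.card_pos
    have h2q : 2 ≤ q := hq.two_le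
    rw [hcardW] at hle
    have hle2 : q * Nat.card (DihedralGroup p × DihedralGroup p)
        ≤ 1 * Nat.card (DihedralGroup p × DihedralGroup p) := by simpa using hle
    have hq1 := Nat.le_of_mul_le_mul_right hle2 hpos
    omega
  -- nontrivial χ forces the endpoints to be v₁, v₂
  have hcommKS : ∀ (r : ↥R) (c : Multiplicative (ZMod q)) (w : V) (d : DihedralGroup p),
      w ≠ (r : V × V).1 → w ≠ (r : V × V).2 →
      Commute (kC p q V R (Pi.mulSingle r c)) (sV p q V R (Pi.mulSingle w d)) := by
    intro r c w d h1 h2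
    show kC p q V R (Pi.mulSingle r c) * sV p q V R (Pi.mulSingle w d)
        = sV p q V R (Pi.mulSingle w d) * kC p q V R (Pi.mulSingle r c)
    have e1 : kC p q V R (Pi.mulSingle r c) = mkG p q V R 1 (Pi.mulSingle r c) := rfl
    have e2 : sV p q V R (Pi.mulSingle w d) = mkG p q V R (Pi.mulSingle w d) 1 := rfl
    rw [e1, e2, mkG_mul, mkG_mul]
    congr 1
    · rw [one_mul, mul_one]
    · funext s
      rcases eq_or_ne s r with rfl | hsr
      · simp [Pi.mulSingle_eq_of_ne (Ne.symm h1), Pi.mulSingle_eq_of_ne (Ne.symm h2),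
          show ((1 : DihedralGroup p), (1 : DihedralGroup p)) = 1 from rfl]
      · simp [Pi.mulSingle_eq_of_ne hsr]
  have hend : ∀ r : ↥R, (∃ c, χ r c ≠ 1) →
      ((r : V × V).1 = v₁ ∧ (r : V × V).2 = v₂) ∨
      ((r : V × V).1 = v₂ ∧ (r : V × V).2 = v₁) := by
    intro r ⟨c₀, hc₀⟩
    set z₀ : Multiplicative (ZMod q) := (χ r c₀).left with hz₀def
    have hy₀ : χ r c₀ = SemidirectProduct.inl z₀ := W_of_right_one (hχright r c₀)
    have hz₀ : z₀ ≠ 1 := by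
      intro h
      rw [h, map_one] at hy₀
      exact hc₀ hy₀
    have hv₁mem : v₁ = (r : V × V).1 ∨ v₁ = (r : V × V).2 := by
      by_contra hmem
      push_neg at hmem
      obtain ⟨d, hd⟩ := hα₁s (sr 0)
      have hcm : Commute (χ r c₀) (Fv v₁ d) := by
        have := hcommKS r c₀ v₁ d hmem.1 hmem.2
        exact this.map ψ
      rw [hy₀] at hcm
      have hfix := W_comm_inl hcm
      rw [hFv1right d, hd, Wact_apply] at hfix
      have hsign : ((dihedralSign p (sr 0) * dihedralSign p (1 : DihedralGroup p) : ℤˣ) : ℤ)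
          = -1 := by
        rw [show (1 : DihedralGroup p) = DihedralGroup.r 0 from rfl]
        rfl
      rw [hsign, zpow_neg_one] at hfix
      have hzz : z₀ * z₀ = 1 := by
        nth_rewrite 1 [← hfix]
        rw [inv_mul_cancel]
      have hzz2 : z₀ ^ 2 = 1 := by rw [pow_two, hzz]
      exact hz₀ (multZMod_pow hq hq2 hzz2)
    have hv₂mem : v₂ = (r : V × V).1 ∨ v₂ = (r : V × V).2 := by
      by_contra hmem
      push_neg at hmem
      obtain ⟨d, hd⟩ := hα₂s (sr 0)
      have hcm : Commute (χ r c₀) (Fv v₂ d) := by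
        have := hcommKS r c₀ v₂ d hmem.1 hmem.2
        exact this.map ψ
      rw [hy₀] at hcm
      have hfix := W_comm_inl hcm
      rw [hFv2right d, hd, Wact_apply] at hfix
      have hsign : ((dihedralSign p (1 : DihedralGroup p) * dihedralSign p (sr 0) : ℤˣ) : ℤ)
          = -1 := by
        rw [show (1 : DihedralGroup p) = DihedralGroup.r 0 from rfl]
        rfl
      rw [hsign, zpow_neg_one] at hfix
      have hzz : z₀ * z₀ = 1 := by
        nth_rewrite 1 [← hfix]
        rw [inv_mul_cancel]
      have hzz2 : z₀ ^ 2 = 1 := by rw [pow_two, hzz]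
      exact hz₀ (multZMod_pow hq hq2 hzz2)
    rcases hv₁mem with h1 | h1 <;> rcases hv₂mem with h2 | h2
    · exact absurd (h1.trans h2.symm) hv12
    · exact Or.inl ⟨h1.symm, h2.symm⟩
    · exact Or.inr ⟨h2.symm, h1.symm⟩
    · exact absurd (h1.trans h2.symm) hv12
  obtain ⟨r₀, c₀, hc₀⟩ := hsomeχ
  have hr₀end := hend r₀ ⟨c₀, hc₀⟩
  have hothers : ∀ r : ↥R, r ≠ r₀ → ∀ c, χ r c = 1 := by
    intro r hrr c
    by_contra hc
    have hrend := hend r ⟨c, hc⟩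
    have hpair : ∀ (s : ↥R), ((s : V × V).1 = v₁ ∧ (s : V × V).2 = v₂) →
        (s : V × V) = (v₁, v₂) := by
      intro s hs
      rw [← hs.1, ← hs.2]
    have hpair' : ∀ (s : ↥R), ((s : V × V).1 = v₂ ∧ (s : V × V).2 = v₁) →
        (s : V × V) = (v₂, v₁) := by
      intro s hs
      rw [← hs.1, ← hs.2]
    rcases hrend with hA | hB <;> rcases hr₀end with hA' | hB'
    · exact hrr (Subtype.ext ((hpair r hA).trans (hpair r₀ hA').symm))
    · -- r is (v₁,v₂), r₀ is (v₂,v₁): both in R, contradiction with hor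
      have h1 : (v₁, v₂) ∈ R := (hpair r hA) ▸ r.2
      have h2 : (v₂, v₁) ∈ R := (hpair' r₀ hB') ▸ r₀.2
      exact hor v₁ v₂ h1 h2
    · have h1 : (v₂, v₁) ∈ R := (hpair' r hB) ▸ r.2
      have h2 : (v₁, v₂) ∈ R := (hpair r₀ hA') ▸ r₀.2
      exact hor v₁ v₂ h2 h1
    · exact hrr (Subtype.ext ((hpair' r hB).trans (hpair' r₀ hB').symm))
  have hχinj : ∀ c, χ r₀ c = 1 → c = 1 := by
    intro c hc
    by_contra hcne
    exact hc₀ (multZMod_gen hq hcne (χ r₀) hc c₀)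
  have hr₀T : r₀ ∈ T := by
    by_contra hr
    apply hc₀
    show ψ (kC p q V R (Pi.mulSingle r₀ c₀)) = 1
    apply kill_kC ψ S T hker
    intro s hs
    apply Pi.mulSingle_eq_of_ne
    intro hsr
    exact hr (by rwa [hsr] at hs)
  have hcollκ : ∀ c, ψκ c = χ r₀ (c r₀) := by
    intro c
    have htr : ψκ c = ψκ (fun r => if r ∈ T then c r else 1) := trunc_kC ψ S T hker c
    set Gk : ((r : ↥R) → Multiplicative (ZMod q)) →* Wgrp p q :=
      (χ r₀).comp (Pi.evalMonoidHom (fun _ : ↥R => Multiplicative (ZMod q)) r₀) with hGkdef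
    have key := pi_mem_single (MonoidHom.eqLocus ψκ Gk) T
      (fun r => if r ∈ T then c r else 1) (fun r hr => if_neg hr) ?singles
    case singles =>
      intro r
      have hv1 : ψκ (Pi.mulSingle r ((fun u => if u ∈ T then c u else 1) r))
          = Gk (Pi.mulSingle r ((fun u => if u ∈ T then c u else 1) r)) := by
        rcases eq_or_ne r r₀ with rfl | hr
        · show χ r ((fun u => if u ∈ T then c u else 1) r)
              = χ r ((Pi.mulSingle r ((fun u => if u ∈ T then c u else 1) r)
                : (s : ↥R) → Multiplicative (ZMod q)) r)
          rw [Pi.mulSingle_eq_same]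
        · show χ r ((fun u => if u ∈ T then c u else 1) r)
              = χ r₀ ((Pi.mulSingle r ((fun u => if u ∈ T then c u else 1) r)
                : (s : ↥R) → Multiplicative (ZMod q)) r₀)
          rw [Pi.mulSingle_eq_of_ne (Ne.symm hr), map_one]
          exact hothers r hr _
      exact hv1
    have key2 : ψκ (fun r => if r ∈ T then c r else 1)
        = Gk (fun r => if r ∈ T then c r else 1) := key
    rw [htr, key2]
    show χ r₀ (if r₀ ∈ T then c r₀ else 1) = χ r₀ (c r₀)
    rw [if_pos hr₀T]
  -- final formula
  have hform : ∀ x, ψ x = χ r₀ ((x.1.2 r₀).left) * (Fv v₁ (x.1.1 v₁) * Fv v₂ (x.1.1 v₂)) := by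
    intro x
    rw [hfac x, hcollκ, hcoll2]
  -- kernel equality
  refine ⟨r₀, ?_⟩
  ext x
  simp only [MonoidHom.mem_ker]
  constructor
  · intro h
    rw [hform x] at h
    -- apply rightHom
    have hr : (χ r₀ ((x.1.2 r₀).left)).right *
        ((Fv v₁ (x.1.1 v₁)).right * (Fv v₂ (x.1.1 v₂)).right) = 1 := by
      have := congrArg SemidirectProduct.right h
      rw [SemidirectProduct.mul_right, SemidirectProduct.mul_right] at this
      exact this
    rw [hχright, one_mul, hFv1right, hFv2right] at hr
    have hr1 : α₁ (x.1.1 v₁) * 1 = 1 := congrArg Prod.fst hr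
    have hr2 : (1 : DihedralGroup p) * α₂ (x.1.1 v₂) = 1 := congrArg Prod.snd hr
    rw [mul_one] at hr1
    rw [one_mul] at hr2
    have hx1 : x.1.1 v₁ = 1 := hα₁i (by rw [hr1, map_one])
    have hx2 : x.1.1 v₂ = 1 := hα₂i (by rw [hr2, map_one])
    have hχ1 : χ r₀ ((x.1.2 r₀).left) = 1 := by
      rw [hx1, hx2, map_one, map_one, mul_one, mul_one] at h
      exact h
    have hc1 : (x.1.2 r₀).left = 1 := hχinj _ hχ1
    -- now eProj r₀ x = 1
    show x.1.2 r₀ = 1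
    have hrH : (x.1.2 r₀).right = (x.1.1 (r₀ : V × V).1, x.1.1 (r₀ : V × V).2) := x.2 r₀
    have hends : x.1.1 (r₀ : V × V).1 = 1 ∧ x.1.1 (r₀ : V × V).2 = 1 := by
      rcases hr₀end with ⟨e1, e2⟩ | ⟨e1, e2⟩
      · rw [e1, e2]; exact ⟨hx1, hx2⟩
      · rw [e1, e2]; exact ⟨hx2, hx1⟩
    apply SemidirectProduct.ext
    · rw [hc1]; rfl
    · rw [hrH, hends.1, hends.2]; rfl
  · intro h
    have h1 : (x.1.2 r₀) = 1 := h
    have hc1 : (x.1.2 r₀).left = 1 := by rw [h1]; rfl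
    have hrH : (x.1.2 r₀).right = (x.1.1 (r₀ : V × V).1, x.1.1 (r₀ : V × V).2) := x.2 r₀
    have hr1 : (x.1.1 (r₀ : V × V).1) = 1 := by
      have := congrArg Prod.fst hrH
      rw [h1] at this
      exact this.symm
    have hr2 : (x.1.1 (r₀ : V × V).2) = 1 := by
      have := congrArg Prod.snd hrH
      rw [h1] at this
      exact this.symm
    have hx1 : x.1.1 v₁ = 1 ∧ x.1.1 v₂ = 1 := by
      rcases hr₀end with ⟨e1, e2⟩ | ⟨e1, e2⟩
      · rw [← e1, ← e2]; exact ⟨hr1, hr2⟩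
      · rw [← e2, ← e1]; exact ⟨hr2, hr1⟩
    rw [hform x, hc1, hx1.1, hx1.2, map_one, map_one, map_one, mul_one, mul_one]

end ClassB
section Topology

variable {p q : ℕ} {V : Type} {R : Set (V × V)}

theorem ker_kill {M : Type*} [Group M] (ψ : ↥(GGamma p q V R) →* M)
    (hclosed : IsClosed (ψ.ker : Set ↥(GGamma p q V R)))
    (hfin : Finite (↥(GGamma p q V R) ⧸ ψ.ker)) :
    ∃ (S : Finset V) (T : Finset ↥R),
      (∀ r ∈ T, (r : V × V).1 ∈ S ∧ (r : V × V).2 ∈ S) ∧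
      ∀ x : ↥(GGamma p q V R),
        (∀ v ∈ S, x.1.1 v = 1) → (∀ r ∈ T, x.1.2 r = 1) → ψ x = 1 := by
  classical
  haveI : ψ.ker.FiniteIndex := Subgroup.finiteIndex_of_finite_quotient
  have hopen : IsOpen (ψ.ker : Set ↥(GGamma p q V R)) :=
    Subgroup.isOpen_of_isClosed_of_finiteIndex _ hclosed
  rw [isOpen_induced_iff] at hopen
  obtain ⟨t, htopen, hteq⟩ := hopen
  have h1t : ((1 : ↥(GGamma p q V R)) : (V → DihedralGroup p) × ((r : ↥R) → Wgrp p q)) ∈ t := by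
    have : (1 : ↥(GGamma p q V R)) ∈ (Subtype.val ⁻¹' t) := by
      rw [hteq]; exact ψ.ker.one_mem
    exact this
  have htn : t ∈ nhds (1 : (V → DihedralGroup p) × ((r : ↥R) → Wgrp p q)) :=
    htopen.mem_nhds h1t
  rw [nhds_prod_eq, Filter.mem_prod_iff] at htn
  obtain ⟨A, hA, B, hB, hAB⟩ := htn
  rw [nhds_pi, Filter.mem_pi] at hA
  rw [nhds_pi, Filter.mem_pi] at hB
  obtain ⟨I, hIfin, tA, htA, hIA⟩ := hA
  obtain ⟨J, hJfin, tB, htB, hJB⟩ := hB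
  refine ⟨hIfin.toFinset ∪ hJfin.toFinset.image (fun s : ↥R => (s : V × V).1)
      ∪ hJfin.toFinset.image (fun s : ↥R => (s : V × V).2), hJfin.toFinset, ?_, ?_⟩
  · intro r hr
    constructor
    · apply Finset.mem_union_left
      apply Finset.mem_union_right
      exact Finset.mem_image_of_mem (fun s : ↥R => (s : V × V).1) hr
    · apply Finset.mem_union_right
      exact Finset.mem_image_of_mem (fun s : ↥R => (s : V × V).2) hr
  · intro x hxv hxr
    have hmem : (x : (V → DihedralGroup p) × ((r : ↥R) → Wgrp p q)) ∈ t := by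
      apply hAB
      constructor
      · apply hIA
        intro v hv
        have hx : x.1.1 v = 1 := hxv v (by
          apply Finset.mem_union_left
          apply Finset.mem_union_left
          exact hIfin.mem_toFinset.mpr hv)
        rw [show (x : (V → DihedralGroup p) × ((r : ↥R) → Wgrp p q)).1 v = x.1.1 v from rfl, hx]
        exact mem_of_mem_nhds (htA v)
      · apply hJB
        intro r hr
        have hx : x.1.2 r = 1 := hxr r (hJfin.mem_toFinset.mpr hr)
        rw [show (x : (V → DihedralGroup p) × ((r : ↥R) → Wgrp p q)).2 r = x.1.2 r from rfl, hx]
        exact mem_of_mem_nhds (htB r)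
    have : x ∈ Subtype.val ⁻¹' t := hmem
    rw [hteq] at this
    exact this

end Topology

set_option maxHeartbeats 2000000 in
open Pointwise in
/-- Let `Γ = (V, R)` be a graph and `G` a profinite group topologically
isomorphic to `G_Γ`.  Suppose given bijections `v ↦ N_v` onto the closed normal subgroups
with quotient `≅ D_p`, and `r ↦ M_r` onto those with quotient `≅ W`, together with
isomorphisms `φ_v : G_Γ/ker π_v ≃ G/N_v` and `φ_r : G_Γ/ker π_r ≃ G/M_r` such that
`M_r ⊆ N_v ∩ N_{v'}` for `r = (v,v')` and the canonical squares commute.  Then there is a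
unique continuous isomorphism `φ : G_Γ → G` inducing every `φ_v` and every `φ_r`. -/
theorem statement_15 (p q : ℕ) (hp : p.Prime) (hq : q.Prime) (hpo : Odd p) (hqo : Odd q)
    (hpq : p ≠ q) (V : Type) (R : Set (V × V))
    (hloop : ∀ v : V, (v, v) ∉ R) (hor : ∀ a b : V, (a, b) ∈ R → (b, a) ∉ R)
    (G : Type) [Group G] [TopologicalSpace G] [IsTopologicalGroup G] [CompactSpace G]
    [T2Space G] [TotallyDisconnectedSpace G]
    (hiso : ∃ e : ↥(GGamma p q V R) ≃* G, Continuous ⇑e ∧ Continuous ⇑e.symm)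
    (Nv : V → Subgroup G) (Mr : R → Subgroup G)
    [hNvn : ∀ v, (Nv v).Normal] [hMrn : ∀ r, (Mr r).Normal]
    (hNvinj : Function.Injective Nv)
    (hNvrange : Set.range Nv = {N : Subgroup G | IsClosed (N : Set G) ∧
      ∃ ψ : G →* DihedralGroup p, Function.Surjective ψ ∧ ψ.ker = N})
    (hMrinj : Function.Injective Mr)
    (hMrrange : Set.range Mr = {M : Subgroup G | IsClosed (M : Set G) ∧
      ∃ ψ : G →* Wgrp p q, Function.Surjective ψ ∧ ψ.ker = M})
    (φv : ∀ v : V, (↥(GGamma p q V R) ⧸ (vProj p q V R v).ker) ≃* (G ⧸ Nv v))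
    (φr : ∀ r : R, (↥(GGamma p q V R) ⧸ (eProj p q V R r).ker) ≃* (G ⧸ Mr r))
    (hle : ∀ r : R, Mr r ≤ Nv (r : V × V).1 ⊓ Nv (r : V × V).2)
    (hsq1 : ∀ (r : R) (x : ↥(GGamma p q V R)),
      QuotientGroup.map (Mr r) (Nv (r : V × V).1) (MonoidHom.id G)
        (by rw [Subgroup.comap_id]; exact (hle r).trans inf_le_left)
        (φr r (QuotientGroup.mk x)) = φv (r : V × V).1 (QuotientGroup.mk x))
    (hsq2 : ∀ (r : R) (x : ↥(GGamma p q V R)),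
      QuotientGroup.map (Mr r) (Nv (r : V × V).2) (MonoidHom.id G)
        (by rw [Subgroup.comap_id]; exact (hle r).trans inf_le_right)
        (φr r (QuotientGroup.mk x)) = φv (r : V × V).2 (QuotientGroup.mk x)) :
    ∃! φ : ↥(GGamma p q V R) ≃* G,
      Continuous ⇑φ ∧
      (∀ (v : V) (x : ↥(GGamma p q V R)),
        φv v (QuotientGroup.mk x) = QuotientGroup.mk (φ x)) ∧
      (∀ (r : R) (x : ↥(GGamma p q V R)),
        φr r (QuotientGroup.mk x) = QuotientGroup.mk (φ x)) := by
  classical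
  obtain ⟨e, he, hesymm⟩ := hiso
  haveI : NeZero p := ⟨hp.pos.ne'⟩
  haveI : NeZero q := ⟨hq.pos.ne'⟩
  haveI : Fact q.Prime := ⟨hq⟩
  haveI hWfin : Finite (Wgrp p q) := Finite.of_equiv
    (Multiplicative (ZMod q) × (DihedralGroup p × DihedralGroup p))
    ⟨fun z => ⟨z.1, z.2⟩, fun w => (w.left, w.right), fun z => rfl,
      fun w => by apply SemidirectProduct.ext <;> rfl⟩
  have hneR : ∀ r : ↥R, (r : V × V).1 ≠ (r : V × V).2 := by
    intro r hr12
    have hmem : ((r : V × V).1, (r : V × V).2) ∈ R := r.2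
    rw [← hr12] at hmem
    exact hloop _ hmem
  have hvc : ∀ v, Continuous (vProj p q V R v) := fun v =>
    (continuous_apply v).comp (continuous_fst.comp continuous_subtype_val)
  have hec : ∀ r : ↥R, Continuous (eProj p q V R r) := fun r =>
    (continuous_apply r).comp (continuous_snd.comp continuous_subtype_val)
  -- The maps f_v : G →* D_p and f_r : G →* W.
  set fv : (v : V) → (G →* DihedralGroup p) := fun v =>
    (QuotientGroup.kerLift (vProj p q V R v)).comp
      ((φv v).symm.toMonoidHom.comp (QuotientGroup.mk' (Nv v))) with hfvdef
  set fr : (r : ↥R) → (G →* Wgrp p q) := fun r =>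
    (QuotientGroup.kerLift (eProj p q V R r)).comp
      ((φr r).symm.toMonoidHom.comp (QuotientGroup.mk' (Mr r))) with hfrdef
  have hfv : ∀ (v : V) (g : G), fv v g
      = QuotientGroup.kerLift (vProj p q V R v) ((φv v).symm (QuotientGroup.mk g)) :=
    fun v g => rfl
  have hfr : ∀ (r : ↥R) (g : G), fr r g
      = QuotientGroup.kerLift (eProj p q V R r) ((φr r).symm (QuotientGroup.mk g)) :=
    fun r g => rfl
  have hP1 : ∀ (v : V) (x : ↥(GGamma p q V R)) (g : G),
      φv v (QuotientGroup.mk x) = QuotientGroup.mk g → fv v g = vProj p q V R v x := by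
    intro v x g h
    have h2 : (φv v).symm (QuotientGroup.mk g) = QuotientGroup.mk x := by
      rw [← h, MulEquiv.symm_apply_apply]
    rw [hfv, h2, QuotientGroup.kerLift_mk]
  have hP2 : ∀ (r : ↥R) (x : ↥(GGamma p q V R)) (g : G),
      φr r (QuotientGroup.mk x) = QuotientGroup.mk g → fr r g = eProj p q V R r x := by
    intro r x g h
    have h2 : (φr r).symm (QuotientGroup.mk g) = QuotientGroup.mk x := by
      rw [← h, MulEquiv.symm_apply_apply]
    rw [hfr, h2, QuotientGroup.kerLift_mk]
  have hfvker : ∀ (v : V) (g : G), fv v g = 1 ↔ g ∈ Nv v := by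
    intro v g
    constructor
    · intro h
      rw [hfv] at h
      have h1 : (φv v).symm (QuotientGroup.mk g) = 1 :=
        QuotientGroup.kerLift_injective _ (by rw [h, map_one])
      have h2 : (QuotientGroup.mk g : G ⧸ Nv v) = 1 := by
        have h3 := congrArg (φv v) h1
        rwa [MulEquiv.apply_symm_apply, map_one] at h3
      exact (QuotientGroup.eq_one_iff g).mp h2
    · intro h
      rw [hfv, (QuotientGroup.eq_one_iff g).mpr h, map_one, map_one]
  have hfrker : ∀ (r : ↥R) (g : G), fr r g = 1 ↔ g ∈ Mr r := by
    intro r g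
    constructor
    · intro h
      rw [hfr] at h
      have h1 : (φr r).symm (QuotientGroup.mk g) = 1 :=
        QuotientGroup.kerLift_injective _ (by rw [h, map_one])
      have h2 : (QuotientGroup.mk g : G ⧸ Mr r) = 1 := by
        have h3 := congrArg (φr r) h1
        rwa [MulEquiv.apply_symm_apply, map_one] at h3
      exact (QuotientGroup.eq_one_iff g).mp h2
    · intro h
      rw [hfr, (QuotientGroup.eq_one_iff g).mpr h, map_one, map_one]
  have hfvsurj : ∀ v : V, Function.Surjective (fv v) := by
    intro v d
    obtain ⟨x, hx⟩ := vProj_surjective p q V R v d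
    obtain ⟨g, hg⟩ := QuotientGroup.mk'_surjective (Nv v) (φv v (QuotientGroup.mk x))
    exact ⟨g, by rw [hP1 v x g hg.symm, hx]⟩
  have hfrsurj : ∀ r : ↥R, Function.Surjective (fr r) := by
    intro r w
    obtain ⟨x, hx⟩ := eProj_surjective p q r (hneR r) w
    obtain ⟨g, hg⟩ := QuotientGroup.mk'_surjective (Mr r) (φr r (QuotientGroup.mk x))
    exact ⟨g, by rw [hP2 r x g hg.symm, hx]⟩
  -- compatibility
  have hcompat : ∀ (r : ↥R) (g : G), SemidirectProduct.rightHom (fr r g)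
      = (fv (r : V × V).1 g, fv (r : V × V).2 g) := by
    intro r g
    obtain ⟨y, hy⟩ := (φr r).surjective (QuotientGroup.mk g)
    obtain ⟨x, hx⟩ := QuotientGroup.mk_surjective y
    have hmk : φr r (QuotientGroup.mk x) = QuotientGroup.mk g := by rw [hx, hy]
    rw [hP2 r x g hmk]
    have h1 : fv (r : V × V).1 g = vProj p q V R (r : V × V).1 x := by
      apply hP1
      have hs := hsq1 r x
      rw [hmk, QuotientGroup.map_mk] at hs
      exact hs.symm
    have h2 : fv (r : V × V).2 g = vProj p q V R (r : V × V).2 x := by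
      apply hP1
      have hs := hsq2 r x
      rw [hmk, QuotientGroup.map_mk] at hs
      exact hs.symm
    rw [h1, h2]
    exact x.2 r
  -- the homomorphism Ψ : G →* G_Γ
  set Ψ : G →* ↥(GGamma p q V R) := {
    toFun := fun g => ⟨(fun v => fv v g, fun r => fr r g), fun r => hcompat r g⟩,
    map_one' := by
      apply Subtype.ext
      apply Prod.ext
      · funext v; exact map_one (fv v)
      · funext r; exact map_one (fr r),
    map_mul' := fun g g' => by
      apply Subtype.ext
      apply Prod.ext
      · funext v; exact map_mul (fv v) g g'
      · funext r; exact map_mul (fr r) g g' } with hΨdef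
  have hΨapp1 : ∀ (g : G) (v : V), (Ψ g).1.1 v = fv v g := fun _ _ => rfl
  have hΨapp2 : ∀ (g : G) (r : ↥R), (Ψ g).1.2 r = fr r g := fun _ _ => rfl
  -- closedness properties
  have hNvprop : ∀ v, IsClosed ((Nv v : Subgroup G) : Set G) ∧
      ∃ ψ' : G →* DihedralGroup p, Function.Surjective ψ' ∧ ψ'.ker = Nv v := by
    intro v
    have hm : Nv v ∈ {N : Subgroup G | IsClosed (N : Set G) ∧ ∃ ψ : G →* DihedralGroup p,
        Function.Surjective ψ ∧ ψ.ker = N} := by rw [← hNvrange]; exact ⟨v, rfl⟩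
    exact hm
  have hMrprop : ∀ r : ↥R, IsClosed ((Mr r : Subgroup G) : Set G) ∧
      ∃ ψ' : G →* Wgrp p q, Function.Surjective ψ' ∧ ψ'.ker = Mr r := by
    intro r
    have hm : Mr r ∈ {M : Subgroup G | IsClosed (M : Set G) ∧ ∃ ψ : G →* Wgrp p q,
        Function.Surjective ψ ∧ ψ.ker = M} := by rw [← hMrrange]; exact ⟨r, rfl⟩
    exact hm
  -- the intersection of all the subgroups is trivial
  have hker0 : ∀ g : G, (∀ v, g ∈ Nv v) → (∀ r : ↥R, g ∈ Mr r) → g = 1 := by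
    intro g hgv hgr
    have hv1 : ∀ w, vProj p q V R w (e.symm g) = 1 := by
      intro w
      set K : G →* DihedralGroup p := (vProj p q V R w).comp e.symm.toMonoidHom with hKdef
      have hKsurj : Function.Surjective K :=
        (vProj_surjective p q V R w).comp e.symm.surjective
      have hKclosed : IsClosed ((K.ker : Subgroup G) : Set G) := by
        have hs : ((K.ker : Subgroup G) : Set G)
            = ⇑e.symm ⁻¹' (⇑(vProj p q V R w) ⁻¹' {1}) := rfl
        rw [hs]
        exact (isClosed_singleton.preimage (hvc w)).preimage hesymm
      have hmem : K.ker ∈ Set.range Nv := by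
        rw [hNvrange]; exact ⟨hKclosed, K, hKsurj, rfl⟩
      obtain ⟨v, hv⟩ := hmem
      have : g ∈ K.ker := by rw [← hv]; exact hgv v
      exact this
    have hr1 : ∀ s : ↥R, eProj p q V R s (e.symm g) = 1 := by
      intro s
      set K : G →* Wgrp p q := (eProj p q V R s).comp e.symm.toMonoidHom with hKdef
      have hKsurj : Function.Surjective K :=
        (eProj_surjective p q s (hneR s)).comp e.symm.surjective
      have hKclosed : IsClosed ((K.ker : Subgroup G) : Set G) := by
        have hs : ((K.ker : Subgroup G) : Set G)
            = ⇑e.symm ⁻¹' (⇑(eProj p q V R s) ⁻¹' {1}) := rfl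
        rw [hs]
        exact (isClosed_singleton.preimage (hec s)).preimage hesymm
      have hmem : K.ker ∈ Set.range Mr := by
        rw [hMrrange]; exact ⟨hKclosed, K, hKsurj, rfl⟩
      obtain ⟨r, hr⟩ := hmem
      have : g ∈ K.ker := by rw [← hr]; exact hgr r
      exact this
    have hone : e.symm g = 1 := by
      apply Subtype.ext
      apply Prod.ext
      · funext w; exact hv1 w
      · funext s; exact hr1 s
    have hg := congrArg e hone
    rwa [MulEquiv.apply_symm_apply, map_one] at hg
  -- injectivity of Ψ
  have hΨker : ∀ g, Ψ g = 1 → g = 1 := by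
    intro g hg
    apply hker0 g
    · intro v
      rw [← hfvker v g]
      exact congrArg (fun z : ↥(GGamma p q V R) =>
        (z : (V → DihedralGroup p) × ((r : ↥R) → Wgrp p q)).1 v) hg
    · intro r
      rw [← hfrker r g]
      exact congrArg (fun z : ↥(GGamma p q V R) =>
        (z : (V → DihedralGroup p) × ((r : ↥R) → Wgrp p q)).2 r) hg
  have hΨinj : Function.Injective Ψ := by
    intro a b hab
    have h1 : Ψ (a * b⁻¹) = 1 := by rw [map_mul, map_inv, hab, mul_inv_cancel]
    exact mul_inv_eq_one.mp (hΨker _ h1)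
  -- classification
  have hkerv : ∀ v : V, ((fv v).comp e.toMonoidHom).ker = (Nv v).comap e.toMonoidHom := by
    intro v
    ext x
    simp only [MonoidHom.mem_ker, Subgroup.mem_comap, MonoidHom.comp_apply]
    exact hfvker v (e x)
  have hkere : ∀ r : ↥R, ((fr r).comp e.toMonoidHom).ker = (Mr r).comap e.toMonoidHom := by
    intro r
    ext x
    simp only [MonoidHom.mem_ker, Subgroup.mem_comap, MonoidHom.comp_apply]
    exact hfrker r (e x)
  have hclassV : ∀ v : V, ∃ w, ((fv v).comp e.toMonoidHom).ker = (vProj p q V R w).ker := by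
    intro v
    have hθsurj : Function.Surjective ((fv v).comp e.toMonoidHom) :=
      (hfvsurj v).comp e.surjective
    have hθclosed : IsClosed ((((fv v).comp e.toMonoidHom).ker : Subgroup _) :
        Set ↥(GGamma p q V R)) := by
      have hs : ((((fv v).comp e.toMonoidHom).ker : Subgroup _) : Set ↥(GGamma p q V R))
          = ⇑e ⁻¹' ((Nv v : Subgroup G) : Set G) := by
        ext x
        simp only [SetLike.mem_coe, Set.mem_preimage]
        rw [hkerv v]
        rfl
      rw [hs]
      exact (hNvprop v).1.preimage he
    have hθfin : Finite (↥(GGamma p q V R) ⧸ ((fv v).comp e.toMonoidHom).ker) :=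
      Finite.of_equiv _
        (QuotientGroup.quotientKerEquivOfSurjective _ hθsurj).symm.toEquiv
    obtain ⟨S, T, hST, hkill⟩ := ker_kill _ hθclosed hθfin
    exact classA hp hpo hq hqo hpq _ hθsurj S T hST hkill
  have hclassE : ∀ r : ↥R, ∃ s, ((fr r).comp e.toMonoidHom).ker = (eProj p q V R s).ker := by
    intro r
    have hθsurj : Function.Surjective ((fr r).comp e.toMonoidHom) :=
      (hfrsurj r).comp e.surjective
    have hθclosed : IsClosed ((((fr r).comp e.toMonoidHom).ker : Subgroup _) :
        Set ↥(GGamma p q V R)) := by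
      have hs : ((((fr r).comp e.toMonoidHom).ker : Subgroup _) : Set ↥(GGamma p q V R))
          = ⇑e ⁻¹' ((Mr r : Subgroup G) : Set G) := by
        ext x
        simp only [SetLike.mem_coe, Set.mem_preimage]
        rw [hkere r]
        rfl
      rw [hs]
      exact (hMrprop r).1.preimage he
    have hθfin : Finite (↥(GGamma p q V R) ⧸ ((fr r).comp e.toMonoidHom).ker) :=
      Finite.of_equiv _
        (QuotientGroup.quotientKerEquivOfSurjective _ hθsurj).symm.toEquiv
    obtain ⟨S, T, hST, hkill⟩ := ker_kill _ hθclosed hθfin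
    exact classB hp hpo hq hqo hpq hloop hor _ hθsurj S T hST hkill
  choose σ hσ using hclassV
  choose ρ hρ using hclassE
  -- injectivity of kernels of projections
  have hkerπinj : ∀ w w' : V, (vProj p q V R w).ker = (vProj p q V R w').ker → w = w' := by
    intro w w' h
    by_contra hww
    have hx : (mkG p q V R (Pi.mulSingle w (DihedralGroup.sr 0)) 1)
        ∈ (vProj p q V R w').ker := by
      rw [MonoidHom.mem_ker, vProj_mkG, Pi.mulSingle_eq_of_ne (Ne.symm hww)]
    rw [← h, MonoidHom.mem_ker, vProj_mkG, Pi.mulSingle_eq_same] at hx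
    rw [DihedralGroup.one_def] at hx
    exact nomatch hx
  have hkerρinj : ∀ s s' : ↥R, (eProj p q V R s).ker = (eProj p q V R s').ker → s = s' := by
    intro s s' h
    by_contra hss
    set c₀ : Multiplicative (ZMod q) := Multiplicative.ofAdd (1 : ZMod q) with hc₀def
    have hc₀ : c₀ ≠ 1 := by
      intro hcc
      have h2 : Multiplicative.toAdd c₀ = Multiplicative.toAdd (1 : Multiplicative (ZMod q)) :=
        congrArg _ hcc
      rw [hc₀def] at h2
      simp only [toAdd_ofAdd, toAdd_one] at h2
      exact one_ne_zero h2
    have hx : (mkG p q V R 1 (Pi.mulSingle s c₀)) ∈ (eProj p q V R s').ker := by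
      rw [MonoidHom.mem_ker, eProj_mkG, Pi.mulSingle_eq_of_ne (Ne.symm hss)]
      rfl
    rw [← h, MonoidHom.mem_ker, eProj_mkG, Pi.mulSingle_eq_same] at hx
    exact hc₀ (congrArg SemidirectProduct.left hx)
  -- comap identities
  have hcomapinj : Function.Injective
      (Subgroup.comap (e.toMonoidHom : ↥(GGamma p q V R) →* G)) :=
    Subgroup.comap_injective e.surjective
  have hcomap_id : ∀ H : Subgroup ↥(GGamma p q V R),
      (H.comap e.symm.toMonoidHom).comap e.toMonoidHom = H := by
    intro H
    ext x
    simp only [Subgroup.mem_comap]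
    rw [MulEquiv.coe_toMonoidHom, MulEquiv.coe_toMonoidHom, MulEquiv.symm_apply_apply]
  -- σ and ρ are bijective
  have hσinj : Function.Injective σ := by
    intro v v' h
    apply hNvinj
    apply hcomapinj
    rw [← hkerv, ← hkerv, hσ, hσ, h]
  have hσsurj : Function.Surjective σ := by
    intro w
    set K : G →* DihedralGroup p := (vProj p q V R w).comp e.symm.toMonoidHom with hKdef
    have hKsurj : Function.Surjective K :=
      (vProj_surjective p q V R w).comp e.symm.surjective
    have hKclosed : IsClosed ((K.ker : Subgroup G) : Set G) := by
      have hs : ((K.ker : Subgroup G) : Set G)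
          = ⇑e.symm ⁻¹' (⇑(vProj p q V R w) ⁻¹' {1}) := rfl
      rw [hs]
      exact (isClosed_singleton.preimage (hvc w)).preimage hesymm
    have hmem : K.ker ∈ Set.range Nv := by
      rw [hNvrange]; exact ⟨hKclosed, K, hKsurj, rfl⟩
    obtain ⟨v, hv⟩ := hmem
    refine ⟨v, hkerπinj _ _ ?_⟩
    rw [← hσ v, hkerv, hv]
    have hKker : K.ker = ((vProj p q V R w).ker).comap e.symm.toMonoidHom := by
      ext x
      simp only [MonoidHom.mem_ker, Subgroup.mem_comap]
      rfl
    rw [hKker, hcomap_id]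
  have hρinj : Function.Injective ρ := by
    intro r r' h
    apply hMrinj
    apply hcomapinj
    rw [← hkere, ← hkere, hρ, hρ, h]
  have hρsurj : Function.Surjective ρ := by
    intro s
    set K : G →* Wgrp p q := (eProj p q V R s).comp e.symm.toMonoidHom with hKdef
    have hKsurj : Function.Surjective K :=
      (eProj_surjective p q s (hneR s)).comp e.symm.surjective
    have hKclosed : IsClosed ((K.ker : Subgroup G) : Set G) := by
      have hs : ((K.ker : Subgroup G) : Set G)
          = ⇑e.symm ⁻¹' (⇑(eProj p q V R s) ⁻¹' {1}) := rfl
      rw [hs]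
      exact (isClosed_singleton.preimage (hec s)).preimage hesymm
    have hmem : K.ker ∈ Set.range Mr := by
      rw [hMrrange]; exact ⟨hKclosed, K, hKsurj, rfl⟩
    obtain ⟨r, hr⟩ := hmem
    refine ⟨r, hkerρinj _ _ ?_⟩
    rw [← hρ r, hkere, hr]
    have hKker : K.ker = ((eProj p q V R s).ker).comap e.symm.toMonoidHom := by
      ext x
      simp only [MonoidHom.mem_ker, Subgroup.mem_comap]
      rfl
    rw [hKker, hcomap_id]
  set σE : V ≃ V := Equiv.ofBijective σ ⟨hσinj, hσsurj⟩ with hσE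
  set ρE : ↥R ≃ ↥R := Equiv.ofBijective ρ ⟨hρinj, hρsurj⟩ with hρE
  -- the automorphisms A v and B r
  set A : (v : V) → (DihedralGroup p →* DihedralGroup p) :=
    fun v => ((fv v).comp e.toMonoidHom).comp (iV p q V R (σ v)) with hAdef
  set B : (r : ↥R) → (Wgrp p q →* Wgrp p q) :=
    fun r => ((fr r).comp e.toMonoidHom).comp (eW p q (ρ r) (hneR (ρ r))) with hBdef
  have hAfor : ∀ (v : V) (x : ↥(GGamma p q V R)),
      fv v (e x) = A v (vProj p q V R (σ v) x) := by
    intro v x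
    exact sec_formula ((fv v).comp e.toMonoidHom) (vProj p q V R (σ v)) (iV p q V R (σ v))
      (vProj_iV p q V R (σ v)) (le_of_eq (hσ v).symm) x
  have hBfor : ∀ (r : ↥R) (x : ↥(GGamma p q V R)),
      fr r (e x) = B r (eProj p q V R (ρ r) x) := by
    intro r x
    exact sec_formula ((fr r).comp e.toMonoidHom) (eProj p q V R (ρ r))
      (eW p q (ρ r) (hneR (ρ r))) (eProj_eW p q (ρ r) (hneR (ρ r)))
      (le_of_eq (hρ r).symm) x
  have hAbij : ∀ v, Function.Bijective (A v) := fun v =>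
    sec_bijective ((fv v).comp e.toMonoidHom) (vProj p q V R (σ v)) (iV p q V R (σ v))
      (vProj_iV p q V R (σ v)) (hσ v).symm ((hfvsurj v).comp e.surjective)
  have hBbij : ∀ r, Function.Bijective (B r) := fun r =>
    sec_bijective ((fr r).comp e.toMonoidHom) (eProj p q V R (ρ r))
      (eW p q (ρ r) (hneR (ρ r))) (eProj_eW p q (ρ r) (hneR (ρ r)))
      (hρ r).symm ((hfrsurj r).comp e.surjective)
  set AE : (v : V) → (DihedralGroup p ≃* DihedralGroup p) :=
    fun v => MulEquiv.ofBijective (A v) (hAbij v) with hAE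
  set BE : (r : ↥R) → (Wgrp p q ≃* Wgrp p q) :=
    fun r => MulEquiv.ofBijective (B r) (hBbij r) with hBE
  -- the fundamental relation
  have hrel : ∀ (r : ↥R) (x : ↥(GGamma p q V R)),
      SemidirectProduct.rightHom (B r (eProj p q V R (ρ r) x))
        = (A (r : V × V).1 (vProj p q V R (σ (r : V × V).1) x),
           A (r : V × V).2 (vProj p q V R (σ (r : V × V).2) x)) := by
    intro r x
    have hmem := (Ψ (e x)).2 r
    rw [← hBfor r x, ← hAfor, ← hAfor]
    exact hmem
  -- endpoint compatibility
  have hends : ∀ r : ↥R,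
      (σ (r : V × V).1 = (ρ r : V × V).1 ∧ σ (r : V × V).2 = (ρ r : V × V).2) ∨
      (σ (r : V × V).1 = (ρ r : V × V).2 ∧ σ (r : V × V).2 = (ρ r : V × V).1) := by
    intro r
    have hmem1 : ∀ u : V, u = (r : V × V).1 ∨ u = (r : V × V).2 →
        (σ u = (ρ r : V × V).1 ∨ σ u = (ρ r : V × V).2) := by
      intro u _
      by_contra hcon
      push_neg at hcon
      have h1 : eProj p q V R (ρ r) (mkG p q V R
          (Pi.mulSingle (σ u) (DihedralGroup.sr 0)) 1) = 1 := by
        rw [eProj_mkG]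
        rw [Pi.mulSingle_eq_of_ne (fun h => hcon.1 h.symm),
          Pi.mulSingle_eq_of_ne (fun h => hcon.2 h.symm)]
        rfl
      have h2 := hrel r (mkG p q V R (Pi.mulSingle (σ u) (DihedralGroup.sr 0)) 1)
      rw [h1, map_one, map_one] at h2
      rcases ‹u = (r : V × V).1 ∨ u = (r : V × V).2› with hu | hu
      · subst hu
        have h3 : (1 : DihedralGroup p)
            = A (r : V × V).1 (vProj p q V R (σ (r : V × V).1)
              (mkG p q V R (Pi.mulSingle (σ (r : V × V).1) (DihedralGroup.sr 0)) 1)) :=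
          congrArg Prod.fst h2
        rw [vProj_mkG, Pi.mulSingle_eq_same] at h3
        have h4 : DihedralGroup.sr 0 = (1 : DihedralGroup p) :=
          (hAbij (r : V × V).1).1 (by rw [← h3, map_one])
        rw [DihedralGroup.one_def] at h4
        exact nomatch h4
      · subst hu
        have h3 : (1 : DihedralGroup p)
            = A (r : V × V).2 (vProj p q V R (σ (r : V × V).2)
              (mkG p q V R (Pi.mulSingle (σ (r : V × V).2) (DihedralGroup.sr 0)) 1)) :=
          congrArg Prod.snd h2
        rw [vProj_mkG, Pi.mulSingle_eq_same] at h3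
        have h4 : DihedralGroup.sr 0 = (1 : DihedralGroup p) :=
          (hAbij (r : V × V).2).1 (by rw [← h3, map_one])
        rw [DihedralGroup.one_def] at h4
        exact nomatch h4
    have hσne : σ (r : V × V).1 ≠ σ (r : V × V).2 :=
      fun h => hneR r (hσinj h)
    rcases hmem1 (r : V × V).1 (Or.inl rfl) with h1 | h1 <;>
      rcases hmem1 (r : V × V).2 (Or.inr rfl) with h2 | h2
    · exact absurd (h1.trans h2.symm) hσne
    · exact Or.inl ⟨h1, h2⟩
    · exact Or.inr ⟨h1, h2⟩
    · exact absurd (h1.trans h2.symm) hσne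
  -- surjectivity of Ψ
  have hΨsurj : Function.Surjective Ψ := by
    intro y
    set a' : V → DihedralGroup p :=
      fun w => (AE (σE.symm w)).symm (y.1.1 (σE.symm w)) with ha'
    set b' : (s : ↥R) → Wgrp p q :=
      fun s => (BE (ρE.symm s)).symm (y.1.2 (ρE.symm s)) with hb'
    have hmemX : ∀ s : ↥R, SemidirectProduct.rightHom (b' s)
        = (a' (s : V × V).1, a' (s : V × V).2) := by
      intro s
      set r : ↥R := ρE.symm s with hrdef
      have hρr : ρ r = s := ρE.apply_symm_apply s
      obtain ⟨x, hx⟩ := eProj_surjective p q (ρ r) (hneR (ρ r)) (b' s)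
      have hrw := hrel r x
      rw [hx] at hrw
      have hBb : B r (b' s) = y.1.2 r := by
        show B r ((BE (ρE.symm s)).symm (y.1.2 (ρE.symm s))) = y.1.2 r
        rw [← hrdef]
        exact (BE r).apply_symm_apply _
      rw [hBb] at hrw
      have hy2 := y.2 r
      rw [hy2] at hrw
      -- hrw : (y.1.1 r.1, y.1.1 r.2) = (A r.1 (vProj (σ r.1) x), A r.2 (vProj (σ r.2) x))
      have he1 : vProj p q V R (σ (r : V × V).1) x = (AE (r : V × V).1).symm
          (y.1.1 (r : V × V).1) := by
        have h5 : A (r : V × V).1 (vProj p q V R (σ (r : V × V).1) x)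
            = y.1.1 (r : V × V).1 := (congrArg Prod.fst hrw).symm
        have h6 : (AE (r : V × V).1) (vProj p q V R (σ (r : V × V).1) x)
            = y.1.1 (r : V × V).1 := h5
        rw [← h6, MulEquiv.symm_apply_apply]
      have he2 : vProj p q V R (σ (r : V × V).2) x = (AE (r : V × V).2).symm
          (y.1.1 (r : V × V).2) := by
        have h5 : A (r : V × V).2 (vProj p q V R (σ (r : V × V).2) x)
            = y.1.1 (r : V × V).2 := (congrArg Prod.snd hrw).symm
        have h6 : (AE (r : V × V).2) (vProj p q V R (σ (r : V × V).2) x)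
            = y.1.1 (r : V × V).2 := h5
        rw [← h6, MulEquiv.symm_apply_apply]
      have hxprop : SemidirectProduct.rightHom (b' s)
          = (x.1.1 (ρ r : V × V).1, x.1.1 (ρ r : V × V).2) := by
        rw [← hx]
        exact x.2 (ρ r)
      rw [hxprop]
      rcases hends r with ⟨hA1, hA2⟩ | ⟨hA1, hA2⟩
      · -- aligned : σ r.1 = (ρ r).1, σ r.2 = (ρ r).2
        have hidx1 : σE.symm (s : V × V).1 = (r : V × V).1 := by
          apply σE.injective
          rw [Equiv.apply_symm_apply]
          show (s : V × V).1 = σ (r : V × V).1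
          rw [hA1, hρr]
        have hidx2 : σE.symm (s : V × V).2 = (r : V × V).2 := by
          apply σE.injective
          rw [Equiv.apply_symm_apply]
          show (s : V × V).2 = σ (r : V × V).2
          rw [hA2, hρr]
        apply Prod.ext
        · show x.1.1 (ρ r : V × V).1 = a' (s : V × V).1
          rw [ha']
          show x.1.1 (ρ r : V × V).1
            = (AE (σE.symm (s : V × V).1)).symm (y.1.1 (σE.symm (s : V × V).1))
          rw [hidx1, ← he1, ← hA1]
          rfl
        · show x.1.1 (ρ r : V × V).2 = a' (s : V × V).2
          rw [ha']
          show x.1.1 (ρ r : V × V).2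
            = (AE (σE.symm (s : V × V).2)).symm (y.1.1 (σE.symm (s : V × V).2))
          rw [hidx2, ← he2, ← hA2]
          rfl
      · -- crossed : σ r.1 = (ρ r).2, σ r.2 = (ρ r).1
        have hidx1 : σE.symm (s : V × V).2 = (r : V × V).1 := by
          apply σE.injective
          rw [Equiv.apply_symm_apply]
          show (s : V × V).2 = σ (r : V × V).1
          rw [hA1, hρr]
        have hidx2 : σE.symm (s : V × V).1 = (r : V × V).2 := by
          apply σE.injective
          rw [Equiv.apply_symm_apply]
          show (s : V × V).1 = σ (r : V × V).2
          rw [hA2, hρr]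
        apply Prod.ext
        · show x.1.1 (ρ r : V × V).1 = a' (s : V × V).1
          rw [ha']
          show x.1.1 (ρ r : V × V).1
            = (AE (σE.symm (s : V × V).1)).symm (y.1.1 (σE.symm (s : V × V).1))
          rw [hidx2, ← he2, ← hA2]
          rfl
        · show x.1.1 (ρ r : V × V).2 = a' (s : V × V).2
          rw [ha']
          show x.1.1 (ρ r : V × V).2
            = (AE (σE.symm (s : V × V).2)).symm (y.1.1 (σE.symm (s : V × V).2))
          rw [hidx1, ← he1, ← hA1]
          rfl
    refine ⟨e (⟨(a', b'), hmemX⟩ : ↥(GGamma p q V R)), ?_⟩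
    apply Subtype.ext
    apply Prod.ext
    · funext v
      show fv v (e (⟨(a', b'), hmemX⟩ : ↥(GGamma p q V R))) = y.1.1 v
      rw [hAfor v]
      show A v (a' (σ v)) = y.1.1 v
      rw [ha']
      show A v ((AE (σE.symm (σ v))).symm (y.1.1 (σE.symm (σ v)))) = y.1.1 v
      have hidx : σE.symm (σ v) = v := σE.symm_apply_apply v
      rw [hidx]
      exact (AE v).apply_symm_apply (y.1.1 v)
    · funext s
      show fr s (e (⟨(a', b'), hmemX⟩ : ↥(GGamma p q V R))) = y.1.2 s
      rw [hBfor s]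
      show B s (b' (ρ s)) = y.1.2 s
      rw [hb']
      show B s ((BE (ρE.symm (ρ s))).symm (y.1.2 (ρE.symm (ρ s)))) = y.1.2 s
      have hidx : ρE.symm (ρ s) = s := ρE.symm_apply_apply s
      rw [hidx]
      exact (BE s).apply_symm_apply (y.1.2 s)
  -- continuity of Ψ
  have hNvopen : ∀ v, IsOpen ((Nv v : Subgroup G) : Set G) := by
    intro v
    haveI : Finite (G ⧸ Nv v) := by
      have e1 : (↥(GGamma p q V R) ⧸ (vProj p q V R v).ker) ≃* DihedralGroup p :=
        QuotientGroup.quotientKerEquivOfSurjective _ (vProj_surjective p q V R v)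
      exact Finite.of_equiv (DihedralGroup p) ((φv v).symm.trans e1).toEquiv.symm
    haveI : (Nv v).FiniteIndex := Subgroup.finiteIndex_of_finite_quotient
    exact Subgroup.isOpen_of_isClosed_of_finiteIndex _ (hNvprop v).1
  have hMropen : ∀ r : ↥R, IsOpen ((Mr r : Subgroup G) : Set G) := by
    intro r
    haveI : Finite (G ⧸ Mr r) := by
      have e1 : (↥(GGamma p q V R) ⧸ (eProj p q V R r).ker) ≃* Wgrp p q :=
        QuotientGroup.quotientKerEquivOfSurjective _ (eProj_surjective p q r (hneR r))
      exact Finite.of_equiv (Wgrp p q) ((φr r).symm.trans e1).toEquiv.symm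
    haveI : (Mr r).FiniteIndex := Subgroup.finiteIndex_of_finite_quotient
    exact Subgroup.isOpen_of_isClosed_of_finiteIndex _ (hMrprop r).1
  have hfvcont : ∀ v, Continuous (fv v) := by
    intro v
    rw [continuous_discrete_rng]
    intro d
    by_cases hd : ∃ g₀, fv v g₀ = d
    · obtain ⟨g₀, hg₀⟩ := hd
      have hset : (fv v) ⁻¹' {d} = g₀ • ((Nv v : Subgroup G) : Set G) := by
        ext g
        rw [Set.mem_preimage, Set.mem_singleton_iff, Set.mem_smul_set_iff_inv_smul_mem,
          smul_eq_mul, SetLike.mem_coe]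
        constructor
        · intro h
          apply (hfvker v _).mp
          rw [map_mul, map_inv, hg₀, h, inv_mul_cancel]
        · intro h
          have h1 : fv v (g₀⁻¹ * g) = 1 := (hfvker v _).mpr h
          calc fv v g = fv v (g₀ * (g₀⁻¹ * g)) := by rw [mul_inv_cancel_left]
          _ = fv v g₀ * fv v (g₀⁻¹ * g) := map_mul _ _ _
          _ = d := by rw [hg₀, h1, mul_one]
      rw [hset]
      exact (hNvopen v).smul g₀
    · have hset : (fv v) ⁻¹' {d} = ∅ := by
        ext g
        simp only [Set.mem_preimage, Set.mem_singleton_iff, Set.mem_empty_iff_false,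
          iff_false]
        exact fun h => hd ⟨g, h⟩
      rw [hset]
      exact isOpen_empty
  have hfrcont : ∀ r : ↥R, Continuous (fr r) := by
    intro r
    rw [continuous_discrete_rng]
    intro d
    by_cases hd : ∃ g₀, fr r g₀ = d
    · obtain ⟨g₀, hg₀⟩ := hd
      have hset : (fr r) ⁻¹' {d} = g₀ • ((Mr r : Subgroup G) : Set G) := by
        ext g
        rw [Set.mem_preimage, Set.mem_singleton_iff, Set.mem_smul_set_iff_inv_smul_mem,
          smul_eq_mul, SetLike.mem_coe]
        constructor
        · intro h
          apply (hfrker r _).mp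
          rw [map_mul, map_inv, hg₀, h, inv_mul_cancel]
        · intro h
          have h1 : fr r (g₀⁻¹ * g) = 1 := (hfrker r _).mpr h
          calc fr r g = fr r (g₀ * (g₀⁻¹ * g)) := by rw [mul_inv_cancel_left]
          _ = fr r g₀ * fr r (g₀⁻¹ * g) := map_mul _ _ _
          _ = d := by rw [hg₀, h1, mul_one]
      rw [hset]
      exact (hMropen r).smul g₀
    · have hset : (fr r) ⁻¹' {d} = ∅ := by
        ext g
        simp only [Set.mem_preimage, Set.mem_singleton_iff, Set.mem_empty_iff_false,
          iff_false]
        exact fun h => hd ⟨g, h⟩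
      rw [hset]
      exact isOpen_empty
  have hΨcont : Continuous ⇑Ψ := by
    apply Continuous.subtype_mk
    exact Continuous.prodMk (continuous_pi fun v => hfvcont v)
      (continuous_pi fun r => hfrcont r)
  -- the isomorphism
  have hΨbij : Function.Bijective ⇑Ψ := ⟨hΨinj, hΨsurj⟩
  set φ0 : ↥(GGamma p q V R) ≃* G := (MulEquiv.ofBijective Ψ hΨbij).symm with hφ0
  have hΨφ : ∀ x, Ψ (φ0 x) = x := by
    intro x
    rw [← MulEquiv.ofBijective_apply Ψ hΨbij]
    exact (MulEquiv.ofBijective Ψ hΨbij).apply_symm_apply x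
  have hφ0cont : Continuous ⇑φ0 := by
    rw [continuous_iff_isClosed]
    intro C hC
    have himg : ⇑φ0 ⁻¹' C = ⇑Ψ '' C := by
      ext g
      constructor
      · intro hgC
        exact ⟨φ0 g, hgC, hΨφ g⟩
      · rintro ⟨x, hxC, hxg⟩
        have hx0 : φ0 g = x := by
          apply hΨinj
          rw [hΨφ g, ← hxg]
        rwa [Set.mem_preimage, hx0]
    rw [himg]
    exact (hC.isCompact.image hΨcont).isClosed
  have hprop1 : ∀ (v : V) (x : ↥(GGamma p q V R)),
      φv v (QuotientGroup.mk x) = QuotientGroup.mk (φ0 x) := by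
    intro v x
    have hΨg : Ψ (φ0 x) = x := hΨφ x
    have h1 : QuotientGroup.kerLift (vProj p q V R v)
        ((φv v).symm (QuotientGroup.mk (φ0 x)))
        = QuotientGroup.kerLift (vProj p q V R v) (QuotientGroup.mk x) := by
      rw [QuotientGroup.kerLift_mk, ← hfv v (φ0 x)]
      show fv v (φ0 x) = vProj p q V R v x
      conv_rhs => rw [← hΨg]
      rfl
    have h2 := QuotientGroup.kerLift_injective (vProj p q V R v) h1
    have h3 := congrArg (φv v) h2
    rw [MulEquiv.apply_symm_apply] at h3
    exact h3.symm
  have hprop2 : ∀ (r : ↥R) (x : ↥(GGamma p q V R)),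
      φr r (QuotientGroup.mk x) = QuotientGroup.mk (φ0 x) := by
    intro r x
    have hΨg : Ψ (φ0 x) = x := hΨφ x
    have h1 : QuotientGroup.kerLift (eProj p q V R r)
        ((φr r).symm (QuotientGroup.mk (φ0 x)))
        = QuotientGroup.kerLift (eProj p q V R r) (QuotientGroup.mk x) := by
      rw [QuotientGroup.kerLift_mk, ← hfr r (φ0 x)]
      show fr r (φ0 x) = eProj p q V R r x
      conv_rhs => rw [← hΨg]
      rfl
    have h2 := QuotientGroup.kerLift_injective (eProj p q V R r) h1
    have h3 := congrArg (φr r) h2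
    rw [MulEquiv.apply_symm_apply] at h3
    exact h3.symm
  refine ⟨φ0, ⟨hφ0cont, hprop1, hprop2⟩, ?_⟩
  intro φ' hφ'
  obtain ⟨hφ'cont, hφ'1, hφ'2⟩ := hφ'
  apply MulEquiv.ext
  intro x
  have keyv : ∀ v : V, (φ' x)⁻¹ * φ0 x ∈ Nv v := by
    intro v
    have h1 := hφ'1 v x
    have h2 := hprop1 v x
    have h3 : (QuotientGroup.mk (φ' x) : G ⧸ Nv v) = QuotientGroup.mk (φ0 x) := by
      rw [← h1, h2]
    exact QuotientGroup.eq.mp h3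
  have keyr : ∀ r : ↥R, (φ' x)⁻¹ * φ0 x ∈ Mr r := by
    intro r
    have h1 := hφ'2 r x
    have h2 := hprop2 r x
    have h3 : (QuotientGroup.mk (φ' x) : G ⧸ Mr r) = QuotientGroup.mk (φ0 x) := by
      rw [← h1, h2]
    exact QuotientGroup.eq.mp h3
  have hone := hker0 _ keyv keyr
  exact inv_mul_eq_one.mp hone
end

section
/- Let ℓ be a prime and G a profinite group with a closed normal ℓ-Sylow subgroup S_ℓ, i.e., S_ℓ is a closed normal pro-ℓ subgroup of G containing every closed pro-ℓ subgroup of G. Then for all closed normal subgroups A and B of G: S_ℓA ∩ S_ℓB = S_ℓ(A ∩ B). -/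
open Function

noncomputable section

/-- The Frattini subgroup of a topological group: the intersection of all maximal open
subgroups. -/
def frattiniOpen (G : Type*) [Group G] [TopologicalSpace G] : Subgroup G :=
  ⨅ M ∈ {M : Subgroup G | IsOpen (M : Set G) ∧ IsCoatom M}, M

/-- A Frattini cover: a continuous epimorphism whose kernel is contained in the Frattini
subgroup of the source. -/
def IsFrattiniCover {H G : Type*} [Group H] [TopologicalSpace H] [Group G] [TopologicalSpace G]
    (φ : H →* G) : Prop :=
  Continuous φ ∧ Surjective φ ∧ φ.ker ≤ frattiniOpen H

/-- A universal Frattini cover: a Frattini cover through which every Frattini cover by a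
profinite group factors via a continuous epimorphism. -/
def IsUniversalFrattiniCover {tG G : Type*} [Group tG] [TopologicalSpace tG] [Group G]
    [TopologicalSpace G] (φt : tG →* G) : Prop :=
  IsFrattiniCover φt ∧
    ∀ (H : Type) [Group H] [TopologicalSpace H] [IsTopologicalGroup H] [CompactSpace H]
      [T2Space H] [TotallyDisconnectedSpace H] (β : H →* G), IsFrattiniCover β →
        ∃ γ : tG →* H, Continuous γ ∧ Surjective γ ∧ β.comp γ = φt

/-- A topological group is pro-`ℓ` if each of its continuous finite quotients is an
`ℓ`-group. -/
def IsProL (ℓ : ℕ) (H : Type*) [Group H] [TopologicalSpace H] : Prop :=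
  ∀ (Q : Type) [Group Q] [Finite Q] (φ : H →* Q),
    Surjective φ → IsOpen (φ.ker : Set H) → IsPGroup ℓ Q

end


open Function Subgroup Pointwise

section helpers

variable {G : Type} [Group G] [TopologicalSpace G] [IsTopologicalGroup G] [CompactSpace G]
  [T2Space G] [TotallyDisconnectedSpace G]

lemma exists_openNormal_sub {U : Set G} (hU : IsOpen U) (h1 : (1:G) ∈ U) :
    ∃ N : Subgroup G, N.Normal ∧ IsOpen (N : Set G) ∧ (N : Set G) ⊆ U := by
  obtain ⟨V, hV, h1V, hVU⟩ := compact_exists_isClopen_in_isOpen hU h1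
  obtain ⟨H, hH⟩ := IsTopologicalGroup.exist_openNormalSubgroup_sub_clopen_nhds_of_one hV h1V
  exact ⟨H.toSubgroup, H.isNormal', H.toOpenSubgroup.isOpen, fun y hy => hVU (hH hy)⟩

lemma exists_openNormal_notmem {C : Subgroup G} (hC : IsClosed (C : Set G)) {x : G}
    (hx : x ∉ C) :
    ∃ N : Subgroup G, N.Normal ∧ IsOpen (N : Set G) ∧ x ∉ C ⊔ N := by
  have hU : IsOpen ((fun g => x * g) ⁻¹' (↑C)ᶜ) :=
    (hC.isOpen_compl).preimage (by fun_prop)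
  have h1 : (1:G) ∈ (fun g => x * g) ⁻¹' (↑C)ᶜ := by simpa using hx
  obtain ⟨N, hN, hNo, hNU⟩ := exists_openNormal_sub hU h1
  refine ⟨N, hN, hNo, fun hmem => ?_⟩
  haveI := hN
  have hmem' : x ∈ (C : Set G) * (N : Set G) := by rw [← Subgroup.mul_normal C N]; exact hmem
  obtain ⟨c, hc, n, hn, hcn⟩ := hmem'
  have hninv : x * n⁻¹ ∈ ((C : Set G))ᶜ := hNU (inv_mem hn)
  exact hninv (by rw [← hcn, mul_inv_cancel_right]; exact hc)

end helpers

example {p : ℕ} [Fact p.Prime] (G : Type) [Group G] [Finite G] : Finite (Sylow p G) := inferInstance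


lemma finite_key {F : Type} [Group F] [Finite F] {ℓ : ℕ} (hl : ℓ.Prime)
    (S A B : Subgroup F) (hSn : S.Normal) (hAn : A.Normal) (hBn : B.Normal)
    (hS : IsPGroup ℓ S)
    (hmax : ∀ P : Subgroup F, IsPGroup ℓ P → P ≤ S) :
    (S ⊔ A) ⊓ (S ⊔ B) ≤ S ⊔ (A ⊓ B) := by
  haveI := Fact.mk hl
  haveI := hSn; haveI := hAn; haveI := hBn
  obtain ⟨P⟩ : Nonempty (Sylow ℓ F) := inferInstance
  have hSP : S = P.1 := P.3 hS (hmax P.1 P.2)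
  have hndvd : ¬ ℓ ∣ S.index := by rw [hSP]; exact P.not_dvd_index
  -- the key subgroup inclusion
  set K := A ⊓ (S ⊔ B) with hKdef
  have hABK : A ⊓ B ≤ K := le_inf inf_le_left (inf_le_right.trans le_sup_right)
  set D := (S ⊓ K) ⊔ (A ⊓ B) with hDdef
  have hDK : D ≤ K := sup_le inf_le_right hABK
  have hKD : K ≤ D := by
    set ψ : ↥K →* F ⧸ B := (QuotientGroup.mk' B).comp K.subtype with hψ
    have hker : ψ.ker = (A ⊓ B).subgroupOf K := by
      ext k
      simp only [hψ, MonoidHom.mem_ker, MonoidHom.comp_apply, Subgroup.coe_subtype,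
        QuotientGroup.mk'_apply, QuotientGroup.eq_one_iff, Subgroup.mem_subgroupOf,
        Subgroup.mem_inf]
      exact ⟨fun hb => ⟨k.2.1, hb⟩, fun h => h.2⟩
    have hrange : ψ.range ≤ S.map (QuotientGroup.mk' B) := by
      rintro _ ⟨k, rfl⟩
      have hk : (k : F) ∈ (S : Set F) * (B : Set F) := by
        rw [← Subgroup.mul_normal S B]; exact k.2.2
      obtain ⟨s, hs, b, hb, hsb0⟩ := hk
      have hsb : s * b = (k : F) := hsb0
      refine ⟨s, hs, ?_⟩
      have : ψ k = QuotientGroup.mk' B ((s : F) * b) := by rw [hsb]; rfl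
      rw [this, map_mul]
      have hb1 : QuotientGroup.mk' B b = 1 := (QuotientGroup.eq_one_iff b).mpr hb
      rw [hb1, mul_one]
    have hp : IsPGroup ℓ ψ.range := (hS.map _).to_le hrange
    obtain ⟨n, hn⟩ := IsPGroup.iff_card.mp hp
    have hcard : (A ⊓ B).relIndex K = ℓ ^ n := by
      have := Subgroup.index_ker ψ
      rw [hker] at this
      rw [Subgroup.relIndex, this, hn]
    have hd1 : D.relIndex K ∣ ℓ ^ n := by
      rw [← hcard]
      exact Dvd.intro_left _ (Subgroup.relIndex_mul_relIndex _ _ _ le_sup_right hDK)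
    have hd2 : D.relIndex K ∣ S.index := by
      have h1 : D.relIndex K ∣ (S ⊓ K).relIndex K :=
        Dvd.intro_left _ (Subgroup.relIndex_mul_relIndex _ _ _ le_sup_left hDK)
      rw [Subgroup.inf_relIndex_right] at h1
      exact h1.trans (Subgroup.relIndex_dvd_index_of_normal S K)
    obtain ⟨m, hm, hrel⟩ := (Nat.dvd_prime_pow hl).mp hd1
    have hm0 : m = 0 := by
      by_contra hne
      exact hndvd (dvd_trans (dvd_pow_self ℓ hne) (hrel ▸ hd2))
    have : D.relIndex K = 1 := by rw [hrel, hm0, pow_zero]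
    exact Subgroup.relIndex_eq_one.mp this
  -- now conclude
  intro x hx
  rw [Subgroup.mem_inf] at hx
  obtain ⟨hx1, hx2⟩ := hx
  have hx1' : x ∈ (S : Set F) * (A : Set F) := by
    rw [← Subgroup.mul_normal S A]; exact hx1
  obtain ⟨s, hs, a, ha, hsa0⟩ := hx1'
  have hsa : s * a = x := hsa0
  have hsS : s ∈ S := hs
  have haSB : a ∈ S ⊔ B := by
    have : a = s⁻¹ * x := by rw [← hsa]; group
    rw [this]
    exact mul_mem (inv_mem ((le_sup_left : S ≤ S ⊔ B) hsS)) hx2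
  have haK : a ∈ K := Subgroup.mem_inf.mpr ⟨ha, haSB⟩
  have haD : a ∈ S ⊔ (A ⊓ B) := by
    have := hKD haK
    have hDle : D ≤ S ⊔ (A ⊓ B) := sup_le (inf_le_left.trans le_sup_left) le_sup_right
    exact hDle this
  rw [← hsa]
  exact mul_mem ((le_sup_left : S ≤ S ⊔ (A ⊓ B)) hsS) haD

section quot

variable {G : Type} [Group G] [TopologicalSpace G] [IsTopologicalGroup G] [CompactSpace G]
  [T2Space G]

lemma image_pgroup {ℓ : ℕ} (Sl : Subgroup G) (hSpro : IsProL ℓ ↥Sl)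
    (N : Subgroup G) [N.Normal] (hNo : IsOpen (N : Set G)) :
    IsPGroup ℓ ↥(Sl.map (QuotientGroup.mk' N)) := by
  haveI : Finite (G ⧸ N) := N.quotient_finite_of_isOpen hNo
  set ψ : ↥Sl →* G ⧸ N := (QuotientGroup.mk' N).comp Sl.subtype with hψ
  have hr : ψ.range = Sl.map (QuotientGroup.mk' N) := by
    rw [hψ, MonoidHom.range_comp, Subgroup.range_subtype]
  have hker : (ψ.ker : Set ↥Sl) = (Subtype.val : ↥Sl → G) ⁻¹' (N : Set G) := by
    ext s
    simp [hψ, MonoidHom.mem_ker, QuotientGroup.eq_one_iff]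
  have hko : IsOpen (ψ.ker : Set ↥Sl) := by
    rw [hker]; exact hNo.preimage continuous_subtype_val
  have := hSpro ↥ψ.range ψ.rangeRestrict ψ.rangeRestrict_surjective
    (by rw [MonoidHom.ker_rangeRestrict]; exact hko)
  rwa [hr] at this

end quot

section zorn

variable {G : Type} [Group G] [TopologicalSpace G] [IsTopologicalGroup G] [CompactSpace G]
  [T2Space G]

lemma pgroup_quot_le {ℓ : ℕ} (hl : ℓ.Prime) (Sl : Subgroup G)
    (hSmax : ∀ K : Subgroup G, IsClosed (K : Set G) → IsProL ℓ ↥K → K ≤ Sl)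
    (N : Subgroup G) [N.Normal] (hNo : IsOpen (N : Set G))
    (T' : Subgroup (G ⧸ N)) (hT : IsPGroup ℓ ↥T') :
    T' ≤ Sl.map (QuotientGroup.mk' N) := by
  haveI := Fact.mk hl
  haveI : Finite (G ⧸ N) := N.quotient_finite_of_isOpen hNo
  set f : G →* G ⧸ N := QuotientGroup.mk' N with hfdef
  have hfc : Continuous f := QuotientGroup.continuous_mk
  have hNc : IsClosed (N : Set G) := Subgroup.isClosed_of_isOpen N hNo
  have hfiber : ∀ q : G ⧸ N, IsClosed (f ⁻¹' {q}) := by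
    intro q
    obtain ⟨g₀, rfl⟩ := QuotientGroup.mk'_surjective N q
    have heq : f ⁻¹' {f g₀} = (fun h => g₀⁻¹ * h) ⁻¹' (N : Set G) := by
      ext h
      simp only [Set.mem_preimage, Set.mem_singleton_iff, SetLike.mem_coe]
      constructor
      · intro hh
        have : f (g₀⁻¹ * h) = 1 := by rw [map_mul, map_inv, hh, inv_mul_cancel]
        exact (QuotientGroup.eq_one_iff _).mp this
      · intro hh
        have : f (g₀⁻¹ * h) = 1 := (QuotientGroup.eq_one_iff _).mpr hh
        rw [map_mul, map_inv] at this
        calc f h = f g₀ * ((f g₀)⁻¹ * f h) := by group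
        _ = f g₀ * 1 := by rw [this]
        _ = f g₀ := mul_one _
    rw [heq]
    exact hNc.preimage (by fun_prop)
  -- the Zorn collection
  set 𝒮 : Set (Set G) := {s | ∃ T : Subgroup G, (T : Set G) = s ∧ IsClosed s ∧ T.map f = T'}
    with h𝒮
  -- base point
  have hT₀ : ((T'.comap f : Subgroup G) : Set G) ∈ 𝒮 := by
    refine ⟨T'.comap f, rfl, ?_, Subgroup.map_comap_eq_self_of_surjective
      (QuotientGroup.mk'_surjective N) T'⟩
    have hNle : N ≤ T'.comap f := by
      intro n hn
      have : f n = 1 := (QuotientGroup.eq_one_iff n).mpr hn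
      exact Subgroup.mem_comap.mpr (by rw [this]; exact T'.one_mem)
    exact Subgroup.isClosed_of_isOpen _ (Subgroup.isOpen_mono hNle hNo)
  -- chain condition
  have hchain : ∀ c ⊆ 𝒮, IsChain (· ⊆ ·) c → c.Nonempty →
      ∃ lb ∈ 𝒮, ∀ s ∈ c, lb ⊆ s := by
    intro c hc hcc hne
    set S' : Set (Subgroup G) := {T : Subgroup G | (T : Set G) ∈ c} with hS'
    have hS'ne : S'.Nonempty := by
      obtain ⟨s, hs⟩ := hne
      obtain ⟨T, hTs, _, _⟩ := hc hs
      exact ⟨T, by rw [hS', Set.mem_setOf_eq, hTs]; exact hs⟩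
    have hcoe : ((sInf S' : Subgroup G) : Set G) = ⋂ T ∈ S', (T : Set G) :=
      Subgroup.coe_sInf S'
    refine ⟨(sInf S' : Subgroup G), ⟨sInf S', rfl, ?_, ?_⟩, ?_⟩
    · rw [hcoe]
      refine isClosed_biInter fun T hT => ?_
      obtain ⟨T₁, hT₁, hT₁c, _⟩ := hc hT
      exact hT₁c
    · -- map f (sInf S') = T'
      obtain ⟨T₁, hT₁mem⟩ := hS'ne
      obtain ⟨T₂, hT₂eq, _, hT₂map⟩ := hc hT₁mem
      have hT₂mem : T₂ ∈ S' := by rw [hS', Set.mem_setOf_eq, hT₂eq]; exact hT₁mem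
      apply le_antisymm
      · calc (sInf S').map f ≤ T₂.map f := Subgroup.map_mono (sInf_le hT₂mem)
          _ = T' := hT₂map
      · intro q hq
        -- compactness argument
        have hinst : Nonempty {T // T ∈ S'} := ⟨⟨T₂, hT₂mem⟩⟩
        set t : {T // T ∈ S'} → Set G := fun T => (T.1 : Set G) ∩ f ⁻¹' {q} with ht
        have htd : Directed (· ⊇ ·) t := by
          intro i j
          rcases eq_or_ne (i.1 : Set G) (j.1 : Set G) with h | h
          · exact ⟨i, subset_rfl, Set.inter_subset_inter_left _ h.subset⟩
          · rcases hcc i.2 j.2 (fun hh => h (by exact_mod_cast hh)) with h' | h'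
            · exact ⟨i, subset_rfl, Set.inter_subset_inter_left _ h'⟩
            · exact ⟨j, Set.inter_subset_inter_left _ h', subset_rfl⟩
        have htn : ∀ i, (t i).Nonempty := by
          rintro ⟨T, hT⟩
          obtain ⟨T₃, hT₃eq, _, hT₃map⟩ := hc hT
          have : q ∈ T₃.map f := hT₃map.symm ▸ hq
          obtain ⟨g, hg, hgq⟩ := this
          refine ⟨g, ?_, by simpa using hgq⟩
          have : g ∈ (T₃ : Set G) := hg
          rwa [hT₃eq] at this
        have htcl : ∀ i, IsClosed (t i) := by
          rintro ⟨T, hT⟩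
          obtain ⟨T₃, hT₃eq, hT₃c, _⟩ := hc hT
          exact IsClosed.inter hT₃c (hfiber q)
        have htc : ∀ i, IsCompact (t i) := fun i => (htcl i).isCompact
        obtain ⟨x, hx⟩ := IsCompact.nonempty_iInter_of_directed_nonempty_isCompact_isClosed
          t htd htn htc htcl
        simp only [Set.mem_iInter] at hx
        refine ⟨x, ?_, ?_⟩
        · show x ∈ sInf S'
          rw [Subgroup.mem_sInf]
          intro T hT
          exact (hx ⟨T, hT⟩).1
        · exact (hx ⟨T₂, hT₂mem⟩).2
    · intro s hs
      obtain ⟨T₁, hT₁eq, _, _⟩ := hc hs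
      have : T₁ ∈ S' := by rw [hS', Set.mem_setOf_eq, hT₁eq]; exact hs
      rw [← hT₁eq]
      exact fun y hy => (sInf_le this : sInf S' ≤ T₁) hy
  obtain ⟨m, _, hmin⟩ := zorn_superset_nonempty 𝒮 hchain _ hT₀
  obtain ⟨T, hTeq, hTc, hTmap⟩ := hmin.prop
  subst hTeq
  -- T is pro-ℓ
  have hTpro : IsProL ℓ ↥T := by
    intro Q _ _ φ hφs hφk
    set g : ↥T →* Q × (G ⧸ N) := φ.prod (f.comp T.subtype) with hg
    set R : Subgroup (Q × (G ⧸ N)) := g.range with hR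
    have hmem : ∀ r : ↥R, (r : Q × (G ⧸ N)).2 ∈ T' := by
      rintro ⟨r, t, rfl⟩
      show f ↑t ∈ T'
      rw [← hTmap]
      exact ⟨↑t, t.2, rfl⟩
    set j : ↥R →* ↥T' := ((MonoidHom.snd Q (G ⧸ N)).comp R.subtype).codRestrict T' hmem
      with hj
    have hjs : Surjective j := by
      rintro ⟨q, hq⟩
      rw [← hTmap] at hq
      obtain ⟨t, ht, rfl⟩ := hq
      exact ⟨⟨g ⟨t, ht⟩, ⟨⟨t, ht⟩, rfl⟩⟩, rfl⟩
    obtain ⟨P⟩ : Nonempty (Sylow ℓ ↥R) := Sylow.nonempty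
    have hPtop : Subgroup.map j P.1 = ⊤ := by
      have h := (P.mapSurjective hjs).3 (hT.to_subgroup ⊤) le_top
      have h2 : ((P.mapSurjective hjs) : Subgroup ↥T') = Subgroup.map j P.1 :=
        Sylow.coe_mapSurjective hjs P
      rw [← h2, ← h]
    set P' : Subgroup (Q × (G ⧸ N)) := P.1.map R.subtype with hP'
    have hP'R : P' ≤ R := Subgroup.map_subtype_le P.1
    set W₀ : Subgroup ↥T := Subgroup.comap g P' with hW₀
    have hkerle : g.ker ≤ W₀ := by
      intro u hu
      rw [MonoidHom.mem_ker] at hu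
      show g u ∈ P'
      rw [hu]
      exact P'.one_mem
    have hgker : IsOpen (g.ker : Set ↥T) := by
      have h1 : (g.ker : Set ↥T) = (φ.ker : Set ↥T) ∩
          ((f.comp T.subtype).ker : Set ↥T) := by
        rw [hg, MonoidHom.ker_prod]; rfl
      have h2 : ((f.comp T.subtype).ker : Set ↥T)
          = (Subtype.val : ↥T → G) ⁻¹' (N : Set G) := by
        ext u
        simp only [SetLike.mem_coe, MonoidHom.mem_ker, MonoidHom.comp_apply,
          Subgroup.coe_subtype, Set.mem_preimage, SetLike.mem_coe, hfdef,
          QuotientGroup.mk'_apply, QuotientGroup.eq_one_iff]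
      rw [h1, h2]
      exact hφk.inter (hNo.preimage continuous_subtype_val)
    have hWo : IsOpen (W₀ : Set ↥T) := Subgroup.isOpen_mono hkerle hgker
    haveI hTcomp : CompactSpace ↥T := isCompact_iff_compactSpace.mp hTc.isCompact
    have hW₀c : IsClosed (W₀ : Set ↥T) := Subgroup.isClosed_of_isOpen _ hWo
    set W : Subgroup G := W₀.map T.subtype with hW
    have hWc : IsClosed (W : Set G) := by
      have heq : (W : Set G) = (Subtype.val : ↥T → G) '' (W₀ : Set ↥T) := by
        rw [hW]; rfl
      rw [heq]
      exact (hW₀c.isCompact.image continuous_subtype_val).isClosed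
    have hWsub : (W : Set G) ⊆ (T : Set G) := by
      rintro _ ⟨u, _, rfl⟩
      exact u.2
    have hWmap : W.map f = T' := by
      rw [hW, Subgroup.map_map]
      have hcomp : f.comp T.subtype = (MonoidHom.snd Q (G ⧸ N)).comp g := by
        rw [hg, MonoidHom.snd_comp_prod]
      rw [hcomp, ← Subgroup.map_map, hW₀, Subgroup.map_comap_eq, ← hR,
        inf_eq_right.mpr hP'R, hP', Subgroup.map_map]
      have hcomp2 : (MonoidHom.snd Q (G ⧸ N)).comp R.subtype = T'.subtype.comp j := by
        rw [hj]; rfl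
      rw [hcomp2, ← Subgroup.map_map, hPtop, ← MonoidHom.range_eq_map,
        Subgroup.range_subtype]
    have hWmem : (W : Set G) ∈ 𝒮 := ⟨W, rfl, hWc, hWmap⟩
    have hTW : (T : Set G) ⊆ (W : Set G) := hmin.2 hWmem hWsub
    have hRP : R ≤ P' := by
      rintro _ ⟨u, rfl⟩
      have : (u : G) ∈ W := hTW u.2
      obtain ⟨v, hv, hvu⟩ := this
      have : v = u := Subtype.ext hvu
      rw [← this]
      exact hv
    have hP'eq : P' = R := le_antisymm hP'R hRP
    have hPtop2 : P.1 = ⊤ := by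
      apply Subgroup.map_injective R.subtype_injective
      rw [← hP', hP'eq, ← MonoidHom.range_eq_map, Subgroup.range_subtype]
    have hRp : IsPGroup ℓ ↥R := by
      have h := P.2
      rw [hPtop2] at h
      have hsurj : Surjective ((⊤ : Subgroup ↥R).subtype) := fun r =>
        ⟨⟨r, Subgroup.mem_top r⟩, rfl⟩
      exact h.of_surjective _ hsurj
    have hfst : Surjective ((MonoidHom.fst Q (G ⧸ N)).comp R.subtype) := by
      intro q
      obtain ⟨u, hu⟩ := hφs q
      exact ⟨⟨g u, ⟨u, rfl⟩⟩, hu⟩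
    exact hRp.of_surjective _ hfst
  have hTle : T ≤ Sl := hSmax T hTc hTpro
  calc T' = T.map f := hTmap.symm
    _ ≤ Sl.map f := Subgroup.map_mono hTle

end zorn


/-- Let `ℓ` be a prime and `G` a profinite group with a closed normal
`ℓ`-Sylow subgroup `Sℓ` (a closed normal pro-`ℓ` subgroup containing every closed pro-`ℓ`
subgroup of `G`).  Then for all closed normal subgroups `A` and `B` of `G` we have
`SℓA ∩ SℓB = Sℓ(A ∩ B)` (products of normal subgroups being their joins). -/
theorem statement_16 (ℓ : ℕ) (hl : ℓ.Prime) (G : Type) [Group G] [TopologicalSpace G]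
    [IsTopologicalGroup G] [CompactSpace G] [T2Space G] [TotallyDisconnectedSpace G]
    (Sl : Subgroup G) [Sl.Normal] (hSc : IsClosed (Sl : Set G))
    (hSpro : IsProL ℓ ↥Sl)
    (hSmax : ∀ K : Subgroup G, IsClosed (K : Set G) → IsProL ℓ ↥K → K ≤ Sl)
    (A B : Subgroup G) [A.Normal] [B.Normal]
    (hAc : IsClosed (A : Set G)) (hBc : IsClosed (B : Set G)) :
    (Sl ⊔ A) ⊓ (Sl ⊔ B) = Sl ⊔ (A ⊓ B) := by
  haveI := Fact.mk hl
  apply le_antisymm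
  swap
  · exact le_inf (sup_le_sup_left inf_le_left Sl) (sup_le_sup_left inf_le_right Sl)
  intro x hx
  rw [Subgroup.mem_inf] at hx
  haveI hι : Nonempty {N : Subgroup G // N.Normal ∧ IsOpen (N : Set G)} :=
    ⟨⟨⊤, inferInstance, isOpen_univ⟩⟩
  set E : Set G := (fun s => s⁻¹ * x) '' (Sl : Set G) with hE
  have hEcpt : IsCompact E := hSc.isCompact.image (by fun_prop)
  set t : {N : Subgroup G // N.Normal ∧ IsOpen (N : Set G)} → Set G :=
    fun N => (E ∩ ((A ⊔ N.1 : Subgroup G) : Set G)) ∩ ((B ⊔ N.1 : Subgroup G) : Set G) with ht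
  have htcl : ∀ N, IsClosed (t N) := by
    intro N
    have h1 : IsOpen ((A ⊔ N.1 : Subgroup G) : Set G) := Subgroup.isOpen_mono le_sup_right N.2.2
    have h2 : IsOpen ((B ⊔ N.1 : Subgroup G) : Set G) := Subgroup.isOpen_mono le_sup_right N.2.2
    exact ((hEcpt.isClosed.inter (Subgroup.isClosed_of_isOpen _ h1)).inter
      (Subgroup.isClosed_of_isOpen _ h2))
  have htc : ∀ N, IsCompact (t N) := fun N => (htcl N).isCompact
  have htd : Directed (· ⊇ ·) t := by
    intro N M
    haveI := N.2.1; haveI := M.2.1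
    refine ⟨⟨N.1 ⊓ M.1, by exact Subgroup.normal_inf_normal N.1 M.1, ?_⟩, ?_, ?_⟩
    · rw [Subgroup.coe_inf]; exact N.2.2.inter M.2.2
    · exact Set.inter_subset_inter
        (Set.inter_subset_inter_right _
          (SetLike.coe_subset_coe.mpr (sup_le_sup_left inf_le_left A)))
        (SetLike.coe_subset_coe.mpr (sup_le_sup_left inf_le_left B))
    · exact Set.inter_subset_inter
        (Set.inter_subset_inter_right _
          (SetLike.coe_subset_coe.mpr (sup_le_sup_left inf_le_right A)))
        (SetLike.coe_subset_coe.mpr (sup_le_sup_left inf_le_right B))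
  have htn : ∀ N, (t N).Nonempty := by
    rintro ⟨N, hNn, hNo⟩
    haveI := hNn
    haveI : Finite (G ⧸ N) := N.quotient_finite_of_isOpen hNo
    set f : G →* G ⧸ N := QuotientGroup.mk' N with hfdef
    have hSn : (Sl.map f).Normal :=
      Subgroup.Normal.map inferInstance f (QuotientGroup.mk'_surjective N)
    have hAn : (A.map f).Normal :=
      Subgroup.Normal.map inferInstance f (QuotientGroup.mk'_surjective N)
    have hBn : (B.map f).Normal :=
      Subgroup.Normal.map inferInstance f (QuotientGroup.mk'_surjective N)
    have key := finite_key hl (Sl.map f) (A.map f) (B.map f) hSn hAn hBn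
      (image_pgroup Sl hSpro N hNo)
      (fun P hP => pgroup_quot_le hl Sl hSmax N hNo P hP)
    have h1 : f x ∈ Sl.map f ⊔ A.map f := by
      rw [← Subgroup.map_sup]
      exact ⟨x, hx.1, rfl⟩
    have h2 : f x ∈ Sl.map f ⊔ B.map f := by
      rw [← Subgroup.map_sup]
      exact ⟨x, hx.2, rfl⟩
    have h3 := key (Subgroup.mem_inf.mpr ⟨h1, h2⟩)
    haveI : (A.map f ⊓ B.map f).Normal := by
      haveI := hAn; haveI := hBn
      exact Subgroup.normal_inf_normal _ _
    haveI := hSn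
    have h4 : f x ∈ ((Sl.map f : Set (G ⧸ N)) * ((A.map f ⊓ B.map f : Subgroup (G ⧸ N)) :
        Set (G ⧸ N))) := by
      rw [← Subgroup.mul_normal]; exact h3
    obtain ⟨σ, hσ, γ, hγ, hσγ0⟩ := h4
    have hσγ : σ * γ = f x := hσγ0
    obtain ⟨s, hsSl, hsf⟩ := hσ
    have hγval : f (s⁻¹ * x) = γ := by
      rw [map_mul, map_inv, hsf, ← hσγ]
      group
    have hγ' : γ ∈ A.map f ⊓ B.map f := hγ
    have hyA : s⁻¹ * x ∈ A ⊔ N := by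
      have h5 : s⁻¹ * x ∈ (A.map f).comap f :=
        Subgroup.mem_comap.mpr (by rw [hγval]; exact hγ'.1)
      rwa [Subgroup.comap_map_eq, QuotientGroup.ker_mk'] at h5
    have hyB : s⁻¹ * x ∈ B ⊔ N := by
      have h5 : s⁻¹ * x ∈ (B.map f).comap f :=
        Subgroup.mem_comap.mpr (by rw [hγval]; exact hγ'.2)
      rwa [Subgroup.comap_map_eq, QuotientGroup.ker_mk'] at h5
    exact ⟨s⁻¹ * x, ⟨⟨s, hsSl, rfl⟩, hyA⟩, hyB⟩
  obtain ⟨y, hy⟩ := IsCompact.nonempty_iInter_of_directed_nonempty_isCompact_isClosed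
    t htd htn htc htcl
  simp only [Set.mem_iInter] at hy
  have hyA : y ∈ A := by
    by_contra hyA
    obtain ⟨N₀, hN₀n, hN₀o, hnot⟩ := exists_openNormal_notmem hAc hyA
    exact hnot ((hy ⟨N₀, hN₀n, hN₀o⟩).1.2)
  have hyB : y ∈ B := by
    by_contra hyB
    obtain ⟨N₀, hN₀n, hN₀o, hnot⟩ := exists_openNormal_notmem hBc hyB
    exact hnot ((hy ⟨N₀, hN₀n, hN₀o⟩).2)
  obtain ⟨s, hsSl, hsy⟩ := (hy hι.some).1.1
  have hxy : x = s * y := by rw [← hsy]; group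
  rw [hxy]
  exact mul_mem ((le_sup_left : Sl ≤ Sl ⊔ (A ⊓ B)) hsSl)
    ((le_sup_right : A ⊓ B ≤ Sl ⊔ (A ⊓ B)) (Subgroup.mem_inf.mpr ⟨hyA, hyB⟩))
end

section
/- Let Γ = (V,R) be an infinite graph and let N be an open normal subgroup of G_Γ with G_Γ/N ≅ C_2. Define the vertex width of N to be the least n ≥ 1 such that ⋂_{v∈U} ker(π_v) ⊆ N for some n-element subset U ⊆ V. Then N has vertex width n if and only if there exists an induced subgraph Γ_0 = (V_0,R_0) of Γ with |V_0| = n such that N contains the kernel of the coordinate projection π_{Γ_0} : G_Γ → G_{Γ_0}, and the image N̄ = π_{Γ_0}(N), which is a normal subgroup of G_{Γ_0} containing the product P of the p- and q-Sylow subgroups of G_{Γ_0}, satisfies that ξ_{Γ_0}(N̄) is exactly the even-parity subgroup {(g_v)_{v∈V_0} ∈ C_2^{V_0} : the number of v with g_v = −1 is even}. -/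
open Function

noncomputable section
variable (p q : ℕ) (V : Type*) (R : Set (V × V))

/-- The edge set of the induced subgraph on a set `V₀` of vertices. -/
def inducedR (V0 : Set V) : Set (↥V0 × ↥V0) := {e | ((e.1 : V), (e.2 : V)) ∈ R}

/-- The coordinate projection `π_{Γ₀} : G_Γ → G_{Γ₀}` onto the group of an induced
subgraph. -/
def projGGamma (V0 : Set V) :
    ↥(GGamma p q V R) →* ↥(GGamma p q ↥V0 (inducedR V R V0)) :=
  MonoidHom.codRestrict
    ((MonoidHom.prod
      ((Pi.monoidHom fun v : ↥V0 =>
        Pi.evalMonoidHom (fun _ : V => DihedralGroup p) (v : V)).comp (MonoidHom.fst _ _))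
      ((Pi.monoidHom fun e : inducedR V R V0 =>
        Pi.evalMonoidHom (fun _ : R => Wgrp p q)
          (⟨(((e : ↥V0 × ↥V0).1 : V), ((e : ↥V0 × ↥V0).2 : V)), e.2⟩ : R)).comp
        (MonoidHom.snd _ _))).comp (GGamma p q V R).subtype)
    (GGamma p q ↥V0 (inducedR V R V0))
    (fun x => by
      intro e
      exact x.2 ⟨(((e : ↥V0 × ↥V0).1 : V), ((e : ↥V0 × ↥V0).2 : V)), e.2⟩)
end

section Aux
open DihedralGroup

lemma r_pow' {n : ℕ} (i : ZMod n) (k : ℕ) : (r i) ^ k = r ((k : ZMod n) * i) := by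
  induction k with
  | zero => rw [pow_zero, Nat.cast_zero, zero_mul, one_def]
  | succ k ih => rw [pow_succ, ih, r_mul_r]; congr 1; push_cast; ring

lemma dihedral_pow_p {n : ℕ} (x : DihedralGroup n) (hx : dihedralSign n x = 1) :
    x ^ n = 1 := by
  cases x with
  | r i => rw [r_pow', ZMod.natCast_self, zero_mul, one_def]
  | sr i => exact absurd hx (by show ¬ ((-1 : ℤˣ) = 1); decide)

lemma mult_zmod_pow_q {q : ℕ} (c : Multiplicative (ZMod q)) : c ^ q = 1 := by
  have : Multiplicative.toAdd (c ^ q) = Multiplicative.toAdd (1 : Multiplicative (ZMod q)) := by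
    rw [toAdd_pow, nsmul_eq_mul, ZMod.natCast_self q, zero_mul]
    rfl
  exact Multiplicative.toAdd.injective this

lemma w_pow {p q : ℕ} (b : Wgrp p q) (hb : Wact p q b.right = 1) (k : ℕ) :
    b ^ k = ⟨b.left ^ k, b.right ^ k⟩ := by
  induction k with
  | zero => ext <;> simp
  | succ k ih =>
      rw [pow_succ, ih]
      refine SemidirectProduct.ext ?_ ?_
      · rw [SemidirectProduct.mul_left]
        show b.left ^ k * (Wact p q (b.right ^ k)) b.left = b.left ^ (k+1)
        rw [map_pow, hb, one_pow, pow_succ]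
        rfl
      · rw [SemidirectProduct.mul_right]; rfl

lemma wact_eq_one {p q : ℕ} (h : DihedralGroup p × DihedralGroup p)
    (h1 : dihedralSign p h.1 = 1) (h2 : dihedralSign p h.2 = 1) :
    Wact p q h = 1 := by
  have : Wact p q h = unitsIntAut _ (dihedralSign p h.1 * dihedralSign p h.2) := rfl
  rw [this, h1, h2, mul_one, map_one]

lemma w_pow_eq_one {p q : ℕ} (b : Wgrp p q)
    (h1 : dihedralSign p b.right.1 = 1) (h2 : dihedralSign p b.right.2 = 1) :
    b ^ (p * q) = 1 := by
  rw [w_pow b (wact_eq_one b.right h1 h2)]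
  refine SemidirectProduct.ext ?_ ?_
  · show b.left ^ (p * q) = 1
    rw [mul_comm, pow_mul, mult_zmod_pow_q, one_pow]
  · show b.right ^ (p * q) = (1 : DihedralGroup p × DihedralGroup p)
    have e1 := dihedral_pow_p b.right.1 h1
    have e2 := dihedral_pow_p b.right.2 h2
    rw [pow_mul, Prod.pow_def, Prod.pow_fst, Prod.pow_snd, e1, e2, one_pow]; rfl

end Aux
noncomputable section Aux2
open scoped Classical

lemma mem_GGamma_iff {p q : ℕ} {V : Type*} {R : Set (V × V)}
    (x : (V → DihedralGroup p) × (R → Wgrp p q)) :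
    x ∈ GGamma p q V R ↔ ∀ r : R,
      SemidirectProduct.rightHom (x.2 r) = (x.1 (r : V × V).1, x.1 (r : V × V).2) :=
  Iff.rfl

/-- The extension homomorphism `D_p^V →* G_Γ`. -/
def extA (p q : ℕ) (V : Type*) (R : Set (V × V)) :
    (V → DihedralGroup p) →* ↥(GGamma p q V R) :=
  MonoidHom.codRestrict
    ((MonoidHom.id _).prod (Pi.monoidHom fun r : R =>
      SemidirectProduct.inr.comp
        ((Pi.evalMonoidHom (fun _ : V => DihedralGroup p) (r : V × V).1).prod
         (Pi.evalMonoidHom (fun _ : V => DihedralGroup p) (r : V × V).2))))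
    (GGamma p q V R)
    (fun a => by
      rw [mem_GGamma_iff]
      intro r
      exact SemidirectProduct.rightHom_inr _)

@[simp] lemma extA_fst (p q : ℕ) (V : Type*) (R : Set (V × V)) (a : V → DihedralGroup p) :
    (extA p q V R a).1.1 = a := rfl

/-- vertex part of the section. -/
def apart (p q : ℕ) {V : Type*} (R : Set (V × V)) (V0 : Set V) (v : V) :
    ↥(GGamma p q ↥V0 (inducedR V R V0)) →* DihedralGroup p :=
  if h : v ∈ V0 then vProj p q ↥V0 (inducedR V R V0) ⟨v, h⟩ else 1

lemma apart_pos (p q : ℕ) {V : Type*} (R : Set (V × V)) (V0 : Set V) {v : V} (h : v ∈ V0)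
    (y : ↥(GGamma p q ↥V0 (inducedR V R V0))) :
    apart p q R V0 v y = y.1.1 ⟨v, h⟩ := by
  rw [apart, dif_pos h]; rfl

lemma apart_neg (p q : ℕ) {V : Type*} (R : Set (V × V)) (V0 : Set V) {v : V} (h : v ∉ V0)
    (y : ↥(GGamma p q ↥V0 (inducedR V R V0))) :
    apart p q R V0 v y = 1 := by
  rw [apart, dif_neg h]; rfl

/-- The section homomorphism `G_{Γ₀} →* G_Γ`. -/
def secA (p q : ℕ) {V : Type*} (R : Set (V × V)) (V0 : Set V) :
    ↥(GGamma p q ↥V0 (inducedR V R V0)) →* ↥(GGamma p q V R) :=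
  MonoidHom.codRestrict
    ((Pi.monoidHom fun v : V => apart p q R V0 v).prod
      (Pi.monoidHom fun r : R =>
        if h : (r : V × V).1 ∈ V0 ∧ (r : V × V).2 ∈ V0 then
          eProj p q ↥V0 (inducedR V R V0)
            ⟨(⟨(r : V × V).1, h.1⟩, ⟨(r : V × V).2, h.2⟩), by
              show ((r : V × V).1, (r : V × V).2) ∈ R
              simp only [Prod.mk.eta]
              exact r.2⟩
        else
          SemidirectProduct.inr.comp
            ((apart p q R V0 (r : V × V).1).prod (apart p q R V0 (r : V × V).2))))
    (GGamma p q V R)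
    (fun y => by
      rw [mem_GGamma_iff]
      intro r
      by_cases h : (r : V × V).1 ∈ V0 ∧ (r : V × V).2 ∈ V0
      · show SemidirectProduct.rightHom ((dite _ _ _ : _ →* Wgrp p q) y) = _
        rw [dif_pos h]
        have hy := y.2 ⟨(⟨(r : V × V).1, h.1⟩, ⟨(r : V × V).2, h.2⟩), by
          show ((r : V × V).1, (r : V × V).2) ∈ R
          simp only [Prod.mk.eta]
          exact r.2⟩
        show SemidirectProduct.rightHom (y.1.2 _) =
          (apart p q R V0 (r : V × V).1 y, apart p q R V0 (r : V × V).2 y)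
        rw [hy, apart_pos p q R V0 h.1, apart_pos p q R V0 h.2]
      · show SemidirectProduct.rightHom ((dite _ _ _ : _ →* Wgrp p q) y) = _
        rw [dif_neg h]
        exact SemidirectProduct.rightHom_inr _)

lemma secA_fst (p q : ℕ) {V : Type*} (R : Set (V × V)) (V0 : Set V)
    (y : ↥(GGamma p q ↥V0 (inducedR V R V0))) (v : V) :
    (secA p q R V0 y).1.1 v = apart p q R V0 v y := rfl

lemma proj_secA (p q : ℕ) {V : Type*} (R : Set (V × V)) (V0 : Set V)
    (y : ↥(GGamma p q ↥V0 (inducedR V R V0))) :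
    projGGamma p q V R V0 (secA p q R V0 y) = y := by
  apply Subtype.ext
  apply Prod.ext
  · funext v
    show apart p q R V0 (v : V) y = y.1.1 v
    rw [apart_pos p q R V0 v.2]
  · funext e
    show (dite _ _ _ : _ →* Wgrp p q) y = y.1.2 e
    rw [dif_pos ⟨((e : ↥V0 × ↥V0).1).2, ((e : ↥V0 × ↥V0).2).2⟩]
    show y.1.2 _ = y.1.2 e
    congr 1

end Aux2
noncomputable section Aux3
open scoped Classical

variable {p q : ℕ} {V : Type*} {R : Set (V × V)}

lemma oddKill (hpo : Odd p) (hqo : Odd q) (ψ : ↥(GGamma p q V R) →* ℤˣ)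
    (x : ↥(GGamma p q V R)) (hx : ∀ v, dihedralSign p (x.1.1 v) = 1) : ψ x = 1 := by
  have hpow : x ^ (p * q) = 1 := by
    apply Subtype.ext
    rw [SubmonoidClass.coe_pow]
    apply Prod.ext
    · funext v
      show (x.1.1 ^ (p * q)) v = 1
      rw [Pi.pow_apply, pow_mul, dihedral_pow_p _ (hx v), one_pow]
    · funext r
      show (x.1.2 ^ (p * q)) r = 1
      rw [Pi.pow_apply]
      have hr := x.2 r
      apply w_pow_eq_one
      · have h2 : (x.1.2 r).right.1 = x.1.1 (r : V × V).1 := congrArg Prod.fst hr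
        rw [h2]; exact hx _
      · have h2 : (x.1.2 r).right.2 = x.1.1 (r : V × V).2 := congrArg Prod.snd hr
        rw [h2]; exact hx _
  have : ψ x ^ (p * q) = 1 := by rw [← map_pow, hpow, map_one]
  rcases Int.units_eq_one_or (ψ x) with h | h
  · exact h
  · rw [h, Odd.neg_one_pow (hpo.mul hqo)] at this
    exact absurd this (by decide)

lemma exists_V1 (N : Subgroup ↥(GGamma p q V R)) (hNo : IsOpen (N : Set ↥(GGamma p q V R))) :
    ∃ V1 : Finset V, (projGGamma p q V R (↑V1 : Set V)).ker ≤ N := by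
  obtain ⟨O, hO, hON⟩ := isOpen_induced_iff.mp hNo
  have h1 : ((1 : ↥(GGamma p q V R)) : (V → DihedralGroup p) × (R → Wgrp p q)) ∈ O := by
    have : (1 : ↥(GGamma p q V R)) ∈ Subtype.val ⁻¹' O := hON.symm ▸ N.one_mem
    exact this
  obtain ⟨u, w, hu, hw, h1u, h1w, huw⟩ := isOpen_prod_iff.mp hO 1 1 h1
  obtain ⟨I, uu, hI, hIu⟩ := isOpen_pi_iff.mp hu 1 h1u
  obtain ⟨J, ww, hJ, hJw⟩ := isOpen_pi_iff.mp hw 1 h1w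
  refine ⟨I ∪ Finset.image (fun r : R => (r : V × V).1) J ∪
    Finset.image (fun r : R => (r : V × V).2) J, ?_⟩
  intro x hx
  rw [MonoidHom.mem_ker] at hx
  set V1 : Finset V := I ∪ Finset.image (fun r : R => (r : V × V).1) J ∪
    Finset.image (fun r : R => (r : V × V).2) J with hV1
  have hvert : ∀ v ∈ V1, x.1.1 v = 1 := by
    intro v hv
    have := congrFun (congrArg (fun z : ↥(GGamma p q ↥(↑V1 : Set V)
      (inducedR V R (↑V1 : Set V))) => z.1.1) hx) ⟨v, hv⟩
    exact this
  have hedge : ∀ r : R, (r : V × V).1 ∈ V1 → (r : V × V).2 ∈ V1 → x.1.2 r = 1 := by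
    intro r hr1 hr2
    have hmem : ((⟨(r : V × V).1, hr1⟩, ⟨(r : V × V).2, hr2⟩) :
        ↥(↑V1 : Set V) × ↥(↑V1 : Set V)) ∈ inducedR V R (↑V1 : Set V) := by
      show ((r : V × V).1, (r : V × V).2) ∈ R
      simp only [Prod.mk.eta]
      exact r.2
    have := congrFun (congrArg (fun z : ↥(GGamma p q ↥(↑V1 : Set V)
      (inducedR V R (↑V1 : Set V))) => z.1.2) hx) ⟨_, hmem⟩
    exact this
  have hmemO : (x : (V → DihedralGroup p) × (R → Wgrp p q)) ∈ u ×ˢ w := by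
    constructor
    · apply hIu
      intro i hi
      rw [Finset.mem_coe] at hi
      have : x.1.1 i = 1 := hvert i (by
        rw [hV1]
        exact Finset.mem_union_left _ (Finset.mem_union_left _ hi))
      rw [this]
      exact (hI i hi).2
    · apply hJw
      intro r hr
      rw [Finset.mem_coe] at hr
      have : x.1.2 r = 1 := hedge r
        (Finset.mem_union_left _ (Finset.mem_union_right _ (Finset.mem_image_of_mem _ hr)))
        (Finset.mem_union_right _ (Finset.mem_image_of_mem _ hr))
      rw [this]
      exact (hJ r hr).2
  have : x ∈ Subtype.val ⁻¹' O := huw hmemO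
  rw [hON] at this
  exact this

end Aux3
noncomputable section Aux4
open scoped Classical

variable (p q : ℕ) {V : Type*} (R : Set (V × V))

/-- The generator flipping the sign at a single vertex. -/
def sgen (v : V) : ↥(GGamma p q V R) :=
  extA p q V R (fun w => if w = v then DihedralGroup.sr 0 else 1)

lemma sgen_fst (v w : V) : (sgen p q R v).1.1 w = if w = v then DihedralGroup.sr 0 else 1 := rfl

lemma sign_sgen (v w : V) :
    dihedralSign p ((sgen p q R v).1.1 w) = if w = v then -1 else 1 := by
  rw [sgen_fst]
  split <;> rfl

variable {p q R}

lemma master (hpo : Odd p) (hqo : Odd q) (ψ : ↥(GGamma p q V R) →* ℤˣ) (V1 : Finset V)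
    (hV1 : (projGGamma p q V R (↑V1 : Set V)).ker ≤ ψ.ker) (x : ↥(GGamma p q V R)) :
    ψ x = ∏ v ∈ V1.filter (fun v => ψ (sgen p q R v) = -1),
      dihedralSign p (x.1.1 v) := by
  set S := V1.filter (fun v => ψ (sgen p q R v) = -1) with hS
  have key : ∀ (n : ℕ) (x : ↥(GGamma p q V R)),
      (V1.filter (fun v => dihedralSign p (x.1.1 v) ≠ 1)).card = n →
      ψ x = ∏ v ∈ S, dihedralSign p (x.1.1 v) := by
    intro n
    induction n with
    | zero =>
      intro x hx
      have hall : ∀ v ∈ V1, dihedralSign p (x.1.1 v) = 1 := by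
        intro v hv
        by_contra hne
        have : v ∈ V1.filter (fun v => dihedralSign p (x.1.1 v) ≠ 1) :=
          Finset.mem_filter.2 ⟨hv, hne⟩
        rw [Finset.card_eq_zero.mp hx] at this
        exact absurd this (Finset.notMem_empty v)
      have h1 : ∏ v ∈ S, dihedralSign p (x.1.1 v) = 1 :=
        Finset.prod_eq_one (fun v hv => hall v (Finset.mem_filter.mp hv).1)
      rw [h1]
      set z := secA p q R (↑V1 : Set V) (projGGamma p q V R (↑V1 : Set V) x) with hzdef
      have h3 : ψ z = 1 := by
        apply oddKill hpo hqo
        intro w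
        by_cases h : w ∈ (↑V1 : Set V)
        · rw [hzdef, secA_fst, apart_pos p q R _ h]
          exact hall w h
        · rw [hzdef, secA_fst, apart_neg p q R _ h, map_one]
      have hker : projGGamma p q V R (↑V1 : Set V) (x * z⁻¹) = 1 := by
        rw [map_mul, map_inv, hzdef, proj_secA, mul_inv_cancel]
      have h2 : ψ (x * z⁻¹) = 1 := hV1 (MonoidHom.mem_ker.2 hker)
      calc ψ x = ψ (x * z⁻¹) * ψ z := by rw [← map_mul, inv_mul_cancel_right]
      _ = 1 := by rw [h2, h3, mul_one]
    | succ n ih =>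
      intro x hx
      have hpos : (V1.filter (fun v => dihedralSign p (x.1.1 v) ≠ 1)).Nonempty := by
        rw [← Finset.card_pos, hx]; exact Nat.succ_pos n
      obtain ⟨v, hv⟩ := hpos
      obtain ⟨hv1, hsv⟩ := Finset.mem_filter.mp hv
      have hsv' : dihedralSign p (x.1.1 v) = -1 := by
        rcases Int.units_eq_one_or (dihedralSign p (x.1.1 v)) with h | h
        · exact absurd h hsv
        · exact h
      set x' := x * sgen p q R v with hx'def
      have hcoord : ∀ w, dihedralSign p (x'.1.1 w) =
          dihedralSign p (x.1.1 w) * (if w = v then -1 else 1) := by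
        intro w
        have : x'.1.1 w = x.1.1 w * (sgen p q R v).1.1 w := rfl
        rw [this, map_mul, sign_sgen]
      have hfilt : V1.filter (fun w => dihedralSign p (x'.1.1 w) ≠ 1) =
          (V1.filter (fun w => dihedralSign p (x.1.1 w) ≠ 1)).erase v := by
        ext w
        rw [Finset.mem_erase, Finset.mem_filter, Finset.mem_filter]
        by_cases hwv : w = v
        · subst hwv
          simp [hcoord w, hsv']
        · simp only [hcoord w, if_neg hwv, mul_one, ne_eq]
          tauto
      have hcard : (V1.filter (fun w => dihedralSign p (x'.1.1 w) ≠ 1)).card = n := by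
        rw [hfilt, Finset.card_erase_of_mem hv, hx]
        rfl
      have key2 := ih x' hcard
      have hψσ : ψ (sgen p q R v) = if v ∈ S then -1 else 1 := by
        by_cases h : v ∈ S
        · rw [if_pos h]; exact (Finset.mem_filter.mp h).2
        · rw [if_neg h]
          rcases Int.units_eq_one_or (ψ (sgen p q R v)) with h' | h'
          · exact h'
          · exact absurd (Finset.mem_filter.2 ⟨hv1, h'⟩) h
      have hprod : ∏ w ∈ S, dihedralSign p (x'.1.1 w) =
          (∏ w ∈ S, dihedralSign p (x.1.1 w)) * (if v ∈ S then -1 else 1) := by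
        rw [Finset.prod_congr rfl (fun w _ => hcoord w), Finset.prod_mul_distrib,
          Finset.prod_ite_eq' S v (fun _ => (-1 : ℤˣ))]
      have hcc : ((if v ∈ S then (-1 : ℤˣ) else 1) * (if v ∈ S then (-1 : ℤˣ) else 1)) = 1 := by
        split <;> decide
      calc ψ x = ψ x * (ψ (sgen p q R v) * ψ (sgen p q R v)) := by
            rw [hψσ, hcc, mul_one]
        _ = ψ x' * ψ (sgen p q R v) := by rw [hx'def, map_mul, mul_assoc]
        _ = (∏ w ∈ S, dihedralSign p (x.1.1 w)) *
            ((if v ∈ S then (-1 : ℤˣ) else 1) * (if v ∈ S then (-1 : ℤˣ) else 1)) := by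
            rw [key2, hprod, hψσ, mul_assoc]
        _ = ∏ w ∈ S, dihedralSign p (x.1.1 w) := by rw [hcc, mul_one]
  exact key _ x rfl

end Aux4
/-- Let `Γ = (V, R)` be an infinite graph and `N` an open normal subgroup
of `G_Γ` with `G_Γ/N ≅ C_2`.  Then `N` has vertex width `n` (i.e. `n` is the least `m ≥ 1`
with `⋂_{v ∈ U} ker π_v ⊆ N` for some `m`-element `U ⊆ V`) if and only if there is an
induced subgraph `Γ₀` on an `n`-element vertex set `V₀` such that `N ⊇ ker π_{Γ₀}` and the
image `N̄ = π_{Γ₀}(N)` — a normal subgroup of `G_{Γ₀}` containing the product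
`P = ker ξ_{Γ₀}` of the `p`- and `q`-Sylow subgroups — satisfies that `ξ_{Γ₀}(N̄)` is
exactly the even-parity subgroup `{g ∈ C_2^{V₀} : #{v : g v = -1} even}`. -/
theorem statement_18 (p q : ℕ) (hp : p.Prime) (hq : q.Prime) (hpo : Odd p) (hqo : Odd q)
    (hpq : p ≠ q) (V : Type) [Infinite V] (R : Set (V × V))
    (hloop : ∀ v : V, (v, v) ∉ R) (hor : ∀ a b : V, (a, b) ∈ R → (b, a) ∉ R)
    (N : Subgroup ↥(GGamma p q V R)) [N.Normal]
    (hNo : IsOpen (N : Set ↥(GGamma p q V R)))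
    (hC2 : ∃ ψ : ↥(GGamma p q V R) →* ℤˣ, Function.Surjective ψ ∧ ψ.ker = N)
    (n : ℕ) :
    IsLeast {m : ℕ | 1 ≤ m ∧ ∃ U : Finset V, U.card = m ∧
        (⨅ v ∈ U, (vProj p q V R v).ker) ≤ N} n ↔
      ∃ V0 : Finset V, V0.card = n ∧
        (projGGamma p q V R (↑V0 : Set V)).ker ≤ N ∧
        (N.map (projGGamma p q V R (↑V0 : Set V))).Normal ∧
        (xiGamma p q ↥(↑V0 : Set V) (inducedR V R (↑V0 : Set V))).ker ≤
          N.map (projGGamma p q V R (↑V0 : Set V)) ∧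
        ∀ g : ↥(↑V0 : Set V) → ℤˣ,
          g ∈ (N.map (projGGamma p q V R (↑V0 : Set V))).map
              (xiGamma p q ↥(↑V0 : Set V) (inducedR V R (↑V0 : Set V))) ↔
            ∏ v : ↥(↑V0 : Set V), g v = 1 := by
  classical
  obtain ⟨ψ, hsurj, hker⟩ := hC2
  obtain ⟨V1, hV1⟩ := exists_V1 N hNo
  rw [← hker] at hV1
  set S := V1.filter (fun v => ψ (sgen p q R v) = -1) with hSdef
  have hmaster : ∀ x : ↥(GGamma p q V R), ψ x = ∏ v ∈ S, dihedralSign p (x.1.1 v) :=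
    master hpo hqo ψ V1 hV1
  have hmemN : ∀ x : ↥(GGamma p q V R), x ∈ N ↔ ψ x = 1 := by
    intro x; rw [← hker, MonoidHom.mem_ker]
  have hψ_of : ∀ x : ↥(GGamma p q V R),
      (∀ v ∈ S, dihedralSign p (x.1.1 v) = 1) → x ∈ N := by
    intro x hx
    rw [hmemN, hmaster]
    exact Finset.prod_eq_one hx
  have hσS : ∀ v ∈ S, ψ (sgen p q R v) = -1 := fun v hv => (Finset.mem_filter.mp hv).2
  -- `S` is nonempty
  have hSne : S.Nonempty := by
    rw [Finset.nonempty_iff_ne_empty]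
    intro hemp
    obtain ⟨u, hu⟩ := hsurj (-1)
    rw [hmaster, hemp, Finset.prod_empty] at hu
    exact absurd hu (by decide)
  -- characterization of the infimum condition
  have F3 : ∀ U : Finset V, (⨅ v ∈ U, (vProj p q V R v).ker) ≤ N ↔ S ⊆ U := by
    intro U
    constructor
    · intro hle
      intro s hs
      by_contra hsU
      have hmem : sgen p q R s ∈ ⨅ v ∈ U, (vProj p q V R v).ker := by
        rw [Subgroup.mem_iInf]
        intro v
        rw [Subgroup.mem_iInf]
        intro hv
        rw [MonoidHom.mem_ker]
        show (sgen p q R s).1.1 v = 1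
        rw [sgen_fst, if_neg]
        intro h
        exact hsU (h ▸ hv)
      have := (hmemN _).1 (hle hmem)
      rw [hσS s hs] at this
      exact absurd this (by decide)
    · intro hsub x hx
      apply hψ_of
      intro v hv
      have hxv : x.1.1 v = 1 := by
        have h1 := (Subgroup.mem_iInf.mp hx) v
        have h2 := (Subgroup.mem_iInf.mp h1) (hsub hv)
        rw [MonoidHom.mem_ker] at h2
        exact h2
      rw [hxv, map_one]
  -- characterization of the kernel-of-projection condition
  have F4 : ∀ V0 : Finset V, (projGGamma p q V R (↑V0 : Set V)).ker ≤ N ↔ S ⊆ V0 := by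
    intro V0
    constructor
    · intro hle s hs
      by_contra hsV0
      have hmem : sgen p q R s ∈ (projGGamma p q V R (↑V0 : Set V)).ker := by
        rw [MonoidHom.mem_ker]
        apply Subtype.ext
        apply Prod.ext
        · funext v
          show (sgen p q R s).1.1 (v : V) = 1
          rw [sgen_fst, if_neg]
          intro h
          exact hsV0 (h ▸ (Finset.mem_coe.mp v.2))
        · funext e
          have h1 : (sgen p q R s).1.1 ((e : ↥(↑V0 : Set V) × ↥(↑V0 : Set V)).1 : V) = 1 := by
            rw [sgen_fst, if_neg]
            intro h
            exact hsV0 (h ▸ (Finset.mem_coe.mp (e : ↥(↑V0 : Set V) × ↥(↑V0 : Set V)).1.2))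
          have h2 : (sgen p q R s).1.1 ((e : ↥(↑V0 : Set V) × ↥(↑V0 : Set V)).2 : V) = 1 := by
            rw [sgen_fst, if_neg]
            intro h
            exact hsV0 (h ▸ (Finset.mem_coe.mp (e : ↥(↑V0 : Set V) × ↥(↑V0 : Set V)).2.2))
          show SemidirectProduct.inr
            ((sgen p q R s).1.1 ((e : ↥(↑V0 : Set V) × ↥(↑V0 : Set V)).1 : V),
             (sgen p q R s).1.1 ((e : ↥(↑V0 : Set V) × ↥(↑V0 : Set V)).2 : V)) = 1
          rw [h1, h2]
          exact map_one _
      have := (hmemN _).1 (hle hmem)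
      rw [hσS s hs] at this
      exact absurd this (by decide)
    · intro hsub x hx
      rw [MonoidHom.mem_ker] at hx
      apply hψ_of
      intro v hv
      have hxv : x.1.1 v = 1 := by
        have := congrFun (congrArg (fun z : ↥(GGamma p q ↥(↑V0 : Set V)
          (inducedR V R (↑V0 : Set V))) => z.1.1) hx) ⟨v, Finset.mem_coe.mpr (hsub hv)⟩
        exact this
      rw [hxv, map_one]
  have F5 : ∀ V0 : Set V, Function.Surjective (projGGamma p q V R V0) :=
    fun V0 y => ⟨secA p q R V0 y, proj_secA p q R V0 y⟩
  -- the least element is `S.card`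
  have hLeast : IsLeast {m : ℕ | 1 ≤ m ∧ ∃ U : Finset V, U.card = m ∧
      (⨅ v ∈ U, (vProj p q V R v).ker) ≤ N} S.card := by
    constructor
    · exact ⟨Finset.card_pos.mpr hSne, S, rfl, (F3 S).mpr subset_rfl⟩
    · rintro m ⟨-, U, hU, hle⟩
      rw [← hU]
      exact Finset.card_le_card ((F3 U).mp hle)
  constructor
  · -- forward direction
    intro h
    have hn : n = S.card := h.unique hLeast
    refine ⟨S, hn.symm, (F4 S).mpr subset_rfl,
      Subgroup.Normal.map inferInstance _ (F5 _), ?_, ?_⟩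
    · -- kernel of ξ is contained in the image
      intro y hy
      rw [MonoidHom.mem_ker] at hy
      have hy' : ∀ v : ↥(↑S : Set V), dihedralSign p (y.1.1 v) = 1 := fun v => congrFun hy v
      refine ⟨secA p q R (↑S : Set V) y, ?_, proj_secA p q R _ y⟩
      apply hψ_of
      intro v hv
      rw [secA_fst, apart_pos p q R _ (Finset.mem_coe.mpr hv)]
      exact hy' _
    · -- parity characterization
      intro g
      constructor
      · rintro ⟨y, ⟨x, hxN, rfl⟩, rfl⟩
        have : ∀ v : ↥(↑S : Set V),
            xiGamma p q ↥(↑S : Set V) (inducedR V R (↑S : Set V))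
              (projGGamma p q V R (↑S : Set V) x) v = dihedralSign p (x.1.1 (v : V)) :=
          fun v => rfl
        calc ∏ v : ↥(↑S : Set V), xiGamma p q ↥(↑S : Set V) (inducedR V R (↑S : Set V))
              (projGGamma p q V R (↑S : Set V) x) v
            = ∏ v : ↥(↑S : Set V), (fun w : V => dihedralSign p (x.1.1 w)) (v : V) := by
              exact Finset.prod_congr rfl (fun v _ => this v)
          _ = ∏ v ∈ S, dihedralSign p (x.1.1 v) := by
              rw [Finset.prod_set_coe (f := fun w : V => dihedralSign p (x.1.1 w))
                (s := (↑S : Set V)), Finset.toFinset_coe]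
          _ = 1 := by rw [← hmaster]; exact (hmemN x).mp hxN
      · intro hg
        set y := extA p q ↥(↑S : Set V) (inducedR V R (↑S : Set V))
          (fun v => if g v = 1 then 1 else DihedralGroup.sr 0) with hydef
        have hξy : xiGamma p q ↥(↑S : Set V) (inducedR V R (↑S : Set V)) y = g := by
          funext v
          show dihedralSign p (if g v = 1 then 1 else DihedralGroup.sr 0) = g v
          rcases Int.units_eq_one_or (g v) with h | h
          · rw [h, if_pos rfl, map_one]
          · rw [h, if_neg (show ¬(-1 : ℤˣ) = 1 by decide)]
            rfl
        have hψx : ψ (secA p q R (↑S : Set V) y) = 1 := by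
          rw [hmaster]
          calc ∏ v ∈ S, dihedralSign p ((secA p q R (↑S : Set V) y).1.1 v)
              = ∏ v ∈ S, (fun w : V => if h : w ∈ (↑S : Set V) then g ⟨w, h⟩ else 1) v := by
                apply Finset.prod_congr rfl
                intro v hv
                have hv' : v ∈ (↑S : Set V) := Finset.mem_coe.mpr hv
                show dihedralSign p ((secA p q R (↑S : Set V) y).1.1 v) =
                  if h : v ∈ (↑S : Set V) then g ⟨v, h⟩ else 1
                rw [secA_fst, apart_pos p q R _ hv', dif_pos hv']
                exact congrFun hξy ⟨v, hv'⟩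
            _ = ∏ v : ↥(↑S : Set V),
                (fun w : V => if h : w ∈ (↑S : Set V) then g ⟨w, h⟩ else 1) (v : V) := by
                rw [Finset.prod_set_coe
                  (f := fun w : V => if h : w ∈ (↑S : Set V) then g ⟨w, h⟩ else 1)
                  (s := (↑S : Set V)), Finset.toFinset_coe]
            _ = ∏ v : ↥(↑S : Set V), g v := by
                apply Finset.prod_congr rfl
                intro v _
                exact dif_pos v.2
            _ = 1 := hg
        exact ⟨projGGamma p q V R (↑S : Set V) (secA p q R (↑S : Set V) y),
          ⟨secA p q R (↑S : Set V) y, (hmemN _).mpr hψx, rfl⟩,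
          by rw [proj_secA, hξy]⟩
  · -- backward direction
    rintro ⟨V0, hcard, hkerle, hnorm, hxile, hpar⟩
    have hSV0 : S ⊆ V0 := (F4 V0).mp hkerle
    have hV0S : V0 ⊆ S := by
      intro w hw
      by_contra hwS
      set g : ↥(↑V0 : Set V) → ℤˣ := fun v => if (v : V) = w then -1 else 1 with hgdef
      have hgmem : g ∈ (N.map (projGGamma p q V R (↑V0 : Set V))).map
          (xiGamma p q ↥(↑V0 : Set V) (inducedR V R (↑V0 : Set V))) := by
        have hψw : ψ (sgen p q R w) = 1 := by
          rw [hmaster]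
          calc ∏ v ∈ S, dihedralSign p ((sgen p q R w).1.1 v)
              = ∏ v ∈ S, (if v = w then (-1 : ℤˣ) else 1) :=
                Finset.prod_congr rfl (fun v _ => sign_sgen p q R w v)
            _ = if w ∈ S then -1 else 1 := Finset.prod_ite_eq' S w (fun _ => (-1 : ℤˣ))
            _ = 1 := if_neg hwS
        refine ⟨projGGamma p q V R (↑V0 : Set V) (sgen p q R w),
          ⟨sgen p q R w, (hmemN _).mpr hψw, rfl⟩, ?_⟩
        funext v
        show dihedralSign p ((sgen p q R w).1.1 (v : V)) = g v
        rw [sign_sgen, hgdef]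
      have h1 := (hpar g).mp hgmem
      have h2 : ∏ v : ↥(↑V0 : Set V), g v = -1 := by
        calc ∏ v : ↥(↑V0 : Set V), g v
            = ∏ v : ↥(↑V0 : Set V), (fun u : V => if u = w then (-1 : ℤˣ) else 1) (v : V) :=
              rfl
          _ = ∏ v ∈ V0, (if v = w then (-1 : ℤˣ) else 1) := by
              rw [Finset.prod_set_coe (f := fun u : V => if u = w then (-1 : ℤˣ) else 1)
                (s := (↑V0 : Set V)), Finset.toFinset_coe]
          _ = if w ∈ V0 then -1 else 1 := Finset.prod_ite_eq' V0 w (fun _ => (-1 : ℤˣ))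
          _ = -1 := if_pos hw
      rw [h1] at h2
      exact absurd h2 (by decide)
    have hV0 : V0 = S := Finset.Subset.antisymm hV0S hSV0
    have hn : n = S.card := by rw [← hcard, hV0]
    rw [hn]
    exact hLeast
end
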